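/- arXiv:1105.1272 — 7 statements merged into one kernel-verified Lean document; each statement's English description precedes it below -/
import Mathlib

section
/- Let μ be a Borel probability measure on ℝ with compact support which is not a point mass, let α ∈ (0,1) and c ∈ ℝ, and suppose there exists w ∈ ℂ ∖ ℝ with w·G_μ(w + c) = 1 − α. Then there exists w₀ ∈ ℂ with Im(w₀) > 0 such that {w ∈ ℂ ∖ ℝ : w·G_μ(w + c) = 1 − α} = {w₀, conj(w₀)}; moreover −∫_ℝ (w₀ + c − x)⁻² dμ(x) + (1 − α)/w₀² ≠ 0. -/
set_option linter.unusedSectionVars false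

open MeasureTheory Complex Metric Set

/-- The Cauchy (Stieltjes) transform of a measure on `ℝ`. -/
noncomputable def cauchyT (μ : Measure ℝ) (w : ℂ) : ℂ := ∫ t : ℝ, (w - (t : ℂ))⁻¹ ∂μ

noncomputable def phiM (z₀ z : ℂ) : ℂ := (z - z₀) / (z - (starRingEnd ℂ) z₀)
noncomputable def psiM (z₀ u : ℂ) : ℂ := (z₀ - (starRingEnd ℂ) z₀ * u) / (1 - u)
noncomputable def kfun (μ : Measure ℝ) (α c : ℝ) (z : ℂ) : ℂ := ((1 - α : ℝ) : ℂ) / cauchyT μ z + c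
noncomputable def ffun (μ : Measure ℝ) (α c : ℝ) (z₀ : ℂ) : ℂ → ℂ :=
  fun u => phiM z₀ (kfun μ α c (psiM z₀ u))

lemma sub_ofReal_ne_zero {z : ℂ} (hz : z.im ≠ 0) (x : ℝ) : z - (x : ℂ) ≠ 0 :=
  fun h => hz (by simpa using congrArg Complex.im h)

lemma integrable_inv (μ : Measure ℝ) [IsProbabilityMeasure μ] {z : ℂ} (hz : z.im ≠ 0) :
    Integrable (fun x : ℝ => (z - (x : ℂ))⁻¹) μ := by
  have hcont : Continuous fun x : ℝ => (z - (x : ℂ))⁻¹ :=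
    (continuous_const.sub Complex.continuous_ofReal).inv₀ (fun x => sub_ofReal_ne_zero hz x)
  refine (integrable_const (|z.im|⁻¹)).mono' hcont.aestronglyMeasurable (ae_of_all _ fun x => ?_)
  rw [norm_inv]
  have h1 : |z.im| ≤ ‖z - x‖ := by
    simpa using Complex.abs_im_le_norm (z - x)
  exact inv_anti₀ (abs_pos.2 hz) h1

lemma integrable_inv_sq (μ : Measure ℝ) [IsProbabilityMeasure μ] {z : ℂ} (hz : z.im ≠ 0) :
    Integrable (fun x : ℝ => ((z - (x : ℂ)) ^ 2)⁻¹) μ := by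
  have hcont : Continuous fun x : ℝ => ((z - (x : ℂ)) ^ 2)⁻¹ :=
    ((continuous_const.sub Complex.continuous_ofReal).pow 2).inv₀
      (fun x => pow_ne_zero _ (sub_ofReal_ne_zero hz x))
  refine (integrable_const ((|z.im| ^ 2)⁻¹)).mono' hcont.aestronglyMeasurable
    (ae_of_all _ fun x => ?_)
  rw [norm_inv, norm_pow]
  have h1 : |z.im| ≤ ‖z - x‖ := by
    simpa using Complex.abs_im_le_norm (z - x)
  have := pow_le_pow_left₀ (abs_nonneg _) h1 2
  exact inv_anti₀ (pow_pos (abs_pos.2 hz) 2) this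

lemma im_cauchyT (μ : Measure ℝ) [IsProbabilityMeasure μ] {z : ℂ} (hz : z.im ≠ 0) :
    (cauchyT μ z).im = ∫ x : ℝ, (-(z.im / Complex.normSq (z - (x:ℂ)))) ∂μ := by
  have h := integral_im (μ := μ) (f := fun x : ℝ => (z - (x : ℂ))⁻¹) (integrable_inv μ hz)
  simp only [RCLike.im_to_complex] at h
  rw [cauchyT, ← h]
  refine integral_congr_ae (ae_of_all _ fun x => ?_)
  simp [Complex.inv_im, Complex.sub_im, Complex.ofReal_im, neg_div]

lemma im_cauchyT_neg (μ : Measure ℝ) [IsProbabilityMeasure μ] {z : ℂ} (hz : 0 < z.im) :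
    (cauchyT μ z).im < 0 := by
  have hz' : z.im ≠ 0 := ne_of_gt hz
  rw [im_cauchyT μ hz', integral_neg]
  have hInt : Integrable (fun x : ℝ => z.im / Complex.normSq (z - (x:ℂ))) μ := by
    have h1 := (integrable_inv μ hz').im
    simp only [RCLike.im_to_complex] at h1
    have h2 : (fun x : ℝ => ((z - (x:ℂ))⁻¹).im) = fun x : ℝ => -(z.im / Complex.normSq (z - (x:ℂ))) := by
      funext x
      simp [Complex.inv_im, Complex.sub_im, Complex.ofReal_im, neg_div]
    rw [h2] at h1
    have h3 := h1.neg
    convert h3 using 1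
    funext x
    simp
  have hpos : 0 < ∫ x : ℝ, z.im / Complex.normSq (z - (x:ℂ)) ∂μ := by
    rw [integral_pos_iff_support_of_nonneg_ae _ hInt]
    · have : Function.support (fun x : ℝ => z.im / Complex.normSq (z - (x:ℂ))) = Set.univ := by
        ext x
        simp only [Function.mem_support, Set.mem_univ, iff_true]
        exact div_ne_zero hz' (Complex.normSq_pos.2 (sub_ofReal_ne_zero hz' x)).ne'
      rw [this]
      simp
    · exact ae_of_all _ fun x => div_nonneg hz.le (Complex.normSq_nonneg _)
  linarith

lemma cauchyT_conj (μ : Measure ℝ) [IsProbabilityMeasure μ] (z : ℂ) :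
    cauchyT μ ((starRingEnd ℂ) z) = (starRingEnd ℂ) (cauchyT μ z) := by
  rw [cauchyT, cauchyT, ← integral_conj]
  refine integral_congr_ae (ae_of_all _ fun x => ?_)
  show ((starRingEnd ℂ) z - (x:ℂ))⁻¹ = (starRingEnd ℂ) ((z - (x:ℂ))⁻¹)
  rw [map_inv₀, map_sub, Complex.conj_ofReal]

lemma hasDerivAt_cauchyT (μ : Measure ℝ) [IsProbabilityMeasure μ] {z : ℂ} (hz : z.im ≠ 0) :
    HasDerivAt (cauchyT μ) (∫ x : ℝ, -(((z - (x:ℂ)) ^ 2)⁻¹) ∂μ) z := by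
  set ε := |z.im| / 2 with hε
  have hε0 : 0 < ε := by
    have := abs_pos.2 hz
    positivity
  have him : ∀ w : ℂ, w ∈ ball z ε → ε ≤ |w.im| := by
    intro w hw
    have h1 : |w.im - z.im| ≤ ‖w - z‖ := by
      simpa using Complex.abs_im_le_norm (w - z)
    have h2 : ‖w - z‖ < ε := by
      rw [mem_ball, dist_eq] at hw
      simpa [Complex.dist_eq] using hw
    have h3 : |z.im| ≤ |w.im - z.im| + |w.im| := by
      have := abs_sub_abs_le_abs_sub z.im w.im
      have h4 := abs_sub_comm z.im w.im
      linarith [abs_sub_abs_le_abs_sub z.im w.im, le_abs_self (z.im - w.im)]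
    have : |z.im| ≤ ε + |w.im| := by
      calc |z.im| ≤ |w.im - z.im| + |w.im| := h3
      _ ≤ ε + |w.im| := by linarith
    rw [hε] at this ⊢
    linarith
  have key := hasDerivAt_integral_of_dominated_loc_of_deriv_le (μ := μ)
    (F := fun w (x : ℝ) => (w - (x:ℂ))⁻¹) (F' := fun w (x : ℝ) => -(((w - (x:ℂ)) ^ 2)⁻¹))
    (x₀ := z) (bound := fun _ => (ε ^ 2)⁻¹) (ball_mem_nhds z hε0)
    (Filter.Eventually.of_forall fun w =>
      ((measurable_const.sub Complex.measurable_ofReal).inv).aestronglyMeasurable)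
    (integrable_inv μ hz)
    (((measurable_const.sub Complex.measurable_ofReal).pow_const 2).inv.neg).aestronglyMeasurable
    (ae_of_all _ fun x w hw => ?_) (integrable_const _)
    (ae_of_all _ fun x w hw => ?_)
  · exact key.2
  · -- bound
    have h1 : ε ≤ |w.im| := him w hw
    have h2 : |w.im| ≤ ‖w - x‖ := by
      simpa using Complex.abs_im_le_norm (w - (x:ℂ))
    rw [norm_neg, norm_inv, norm_pow]
    refine inv_anti₀ (pow_pos hε0 2) ?_
    exact pow_le_pow_left₀ hε0.le (h1.trans h2) 2
  · -- derivative
    have hwim : w.im ≠ 0 := by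
      have := him w hw
      intro h; rw [h] at this; simp at this; linarith
    have hne : w - (x:ℂ) ≠ 0 := sub_ofReal_ne_zero hwim x
    have hd : HasDerivAt (fun w : ℂ => w - (x:ℂ)) 1 w := (hasDerivAt_id w).sub_const _
    have : HasDerivAt (fun w : ℂ => (w - (x:ℂ))⁻¹) _ w := hd.inv hne
    exact this.congr_deriv (by ring)

lemma sub_conj_ne_zero {z₀ z : ℂ} (hz₀ : 0 < z₀.im) (hz : 0 < z.im) :
    z - (starRingEnd ℂ) z₀ ≠ 0 := by
  intro h
  have := congrArg Complex.im h
  simp [Complex.sub_im, Complex.conj_im] at this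
  linarith

lemma conj_ne_self {z₀ : ℂ} (hz₀ : 0 < z₀.im) : z₀ - (starRingEnd ℂ) z₀ ≠ 0 := by
  intro h
  have := congrArg Complex.im h
  simp [Complex.sub_im, Complex.conj_im] at this
  linarith

lemma phi_mem_ball {z₀ z : ℂ} (hz₀ : 0 < z₀.im) (hz : 0 < z.im) :
    phiM z₀ z ∈ ball (0 : ℂ) 1 := by
  rw [mem_ball_zero_iff, phiM, norm_div, div_lt_one (norm_pos_iff.2 (sub_conj_ne_zero hz₀ hz))]
  have h1 : Complex.normSq (z - z₀) < Complex.normSq (z - (starRingEnd ℂ) z₀) := by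
    simp only [Complex.normSq_apply, Complex.sub_re, Complex.sub_im, Complex.conj_re,
      Complex.conj_im]
    nlinarith [mul_pos hz₀ hz]
  rw [Complex.norm_def, Complex.norm_def]
  exact Real.sqrt_lt_sqrt (Complex.normSq_nonneg _) h1

lemma one_sub_ne_zero_of_ball {u : ℂ} (hu : u ∈ ball (0 : ℂ) 1) : (1 : ℂ) - u ≠ 0 := by
  rw [mem_ball_zero_iff] at hu
  intro h
  have : u = 1 := by linear_combination -h
  rw [this] at hu
  simp at hu

lemma psi_im_pos {z₀ u : ℂ} (hz₀ : 0 < z₀.im) (hu : u ∈ ball (0 : ℂ) 1) :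
    0 < (psiM z₀ u).im := by
  have hne := one_sub_ne_zero_of_ball hu
  have hnorm : Complex.normSq u < 1 := by
    rw [mem_ball_zero_iff] at hu
    have := Complex.sq_norm u
    nlinarith [norm_nonneg u]
  rw [psiM, Complex.div_im]
  have hden : 0 < Complex.normSq (1 - u) := Complex.normSq_pos.2 hne
  have hnum : (z₀ - (starRingEnd ℂ) z₀ * u).im * (1 - u).re -
      (z₀ - (starRingEnd ℂ) z₀ * u).re * (1 - u).im = z₀.im * (1 - Complex.normSq u) := by
    simp only [Complex.sub_im, Complex.sub_re, Complex.mul_im, Complex.mul_re, Complex.conj_re,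
      Complex.conj_im, Complex.one_re, Complex.one_im, Complex.normSq_apply]
    ring
  have : 0 < z₀.im * (1 - Complex.normSq u) := by nlinarith
  rw [div_sub_div_same, hnum]
  positivity

lemma phi_ne_one {z₀ z : ℂ} (hz₀ : 0 < z₀.im) (hz : 0 < z.im) : phiM z₀ z ≠ 1 := by
  intro h
  rw [phiM, div_eq_one_iff_eq (sub_conj_ne_zero hz₀ hz)] at h
  have h2 : z₀ = (starRingEnd ℂ) z₀ := by linear_combination -h
  exact conj_ne_self hz₀ (by linear_combination h2)

lemma psi_phi {z₀ z : ℂ} (hz₀ : 0 < z₀.im) (hz : 0 < z.im) : psiM z₀ (phiM z₀ z) = z := by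
  have h1 := sub_conj_ne_zero hz₀ hz
  have h2 : (1 : ℂ) - phiM z₀ z ≠ 0 := sub_ne_zero.2 (Ne.symm (phi_ne_one hz₀ hz))
  rw [psiM, div_eq_iff h2, phiM]
  field_simp
  ring

lemma phi_inj {z₀ a b : ℂ} (hz₀ : 0 < z₀.im) (ha : 0 < a.im) (hb : 0 < b.im)
    (h : phiM z₀ a = phiM z₀ b) : a = b := by
  rw [phiM, phiM, div_eq_div_iff (sub_conj_ne_zero hz₀ ha) (sub_conj_ne_zero hz₀ hb)] at h
  have h2 : (a - b) * (z₀ - (starRingEnd ℂ) z₀) = 0 := by linear_combination h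
  rcases mul_eq_zero.1 h2 with h3 | h3
  · linear_combination h3
  · exact absurd h3 (conj_ne_self hz₀)

lemma phi_eq_zero_iff {z₀ z : ℂ} (hz₀ : 0 < z₀.im) (hz : 0 < z.im) :
    phiM z₀ z = 0 ↔ z = z₀ := by
  rw [phiM, div_eq_zero_iff]
  constructor
  · rintro (h | h)
    · linear_combination h
    · exact absurd h (sub_conj_ne_zero hz₀ hz)
  · intro h; left; rw [h, sub_self]

lemma phi_self {z₀ : ℂ} : phiM z₀ z₀ = 0 := by rw [phiM, sub_self, zero_div]

lemma psi_zero {z₀ : ℂ} : psiM z₀ 0 = z₀ := by simp [psiM]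

variable (μ : Measure ℝ) [IsProbabilityMeasure μ]

lemma cauchyT_ne_zero {z : ℂ} (hz : 0 < z.im) : cauchyT μ z ≠ 0 := by
  intro h
  have := im_cauchyT_neg μ hz
  rw [h] at this
  simp at this

lemma k_im_pos (α c : ℝ) (hα1 : α < 1) {z : ℂ} (hz : 0 < z.im) :
    0 < (kfun μ α c z).im := by
  have hG := im_cauchyT_neg μ hz
  have hGne := cauchyT_ne_zero μ hz
  rw [kfun, Complex.add_im, Complex.ofReal_im, add_zero, Complex.div_im]
  have h1 : Complex.normSq (cauchyT μ z) > 0 := Complex.normSq_pos.2 hGne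
  simp only [Complex.ofReal_im, Complex.ofReal_re]
  have h2 : 0 < (1 - α) * -(cauchyT μ z).im / Complex.normSq (cauchyT μ z) := by
    apply div_pos _ h1
    apply mul_pos (by linarith) (by linarith)
  calc (0:ℝ) < (1 - α) * -(cauchyT μ z).im / Complex.normSq (cauchyT μ z) := h2
  _ = 0 * (cauchyT μ z).re / Complex.normSq (cauchyT μ z) - (1 - α) * (cauchyT μ z).im / Complex.normSq (cauchyT μ z) := by ring

lemma k_hasDerivAt (α c : ℝ) {z : ℂ} (hz : 0 < z.im) :
    HasDerivAt (kfun μ α c)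
      (-(((1 - α : ℝ) : ℂ) * (∫ x : ℝ, -(((z - (x:ℂ)) ^ 2)⁻¹) ∂μ)) / (cauchyT μ z) ^ 2) z := by
  have hG' := hasDerivAt_cauchyT μ (z := z) (ne_of_gt hz)
  have hGne := cauchyT_ne_zero μ hz
  have h := (hasDerivAt_const z (((1 - α : ℝ) : ℂ))).div hG' hGne
  have h2 : HasDerivAt (kfun μ α c) _ z := h.add_const (c : ℂ)
  convert h2 using 1
  field_simp
  ring

lemma ffun_hasDerivAt (α c : ℝ) {z₀ : ℂ} (hz₀ : 0 < z₀.im) (hα1 : α < 1) {u : ℂ}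
    (hu : u ∈ ball (0 : ℂ) 1) :
    ∃ d : ℂ, HasDerivAt (ffun μ α c z₀) d u := by
  -- psi differentiable at u
  have hne1 : (1 : ℂ) - u ≠ 0 := one_sub_ne_zero_of_ball hu
  have hψ : HasDerivAt (psiM z₀) ((-( (starRingEnd ℂ) z₀) * (1 - u) -
      (z₀ - (starRingEnd ℂ) z₀ * u) * (-1)) / (1 - u) ^ 2) u := by
    have h1 : HasDerivAt (fun v : ℂ => z₀ - (starRingEnd ℂ) z₀ * v) (-((starRingEnd ℂ) z₀)) u := by
      simpa using ((hasDerivAt_id u).const_mul ((starRingEnd ℂ) z₀)).const_sub z₀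
    have h2 : HasDerivAt (fun v : ℂ => 1 - v) (-1 : ℂ) u := by
      simpa using (hasDerivAt_id u).const_sub (1 : ℂ)
    exact h1.div h2 hne1
  set w := psiM z₀ u with hw
  have hwim : 0 < w.im := psi_im_pos hz₀ hu
  have hk := k_hasDerivAt μ α c hwim
  set v := kfun μ α c w with hv
  have hvim : 0 < v.im := k_im_pos μ α c hα1 hwim
  have hvne : v - (starRingEnd ℂ) z₀ ≠ 0 := sub_conj_ne_zero hz₀ hvim
  have hφ : HasDerivAt (phiM z₀) ((1 * (v - (starRingEnd ℂ) z₀) - (v - z₀) * 1) /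
      (v - (starRingEnd ℂ) z₀) ^ 2) v := by
    have h1 : HasDerivAt (fun z : ℂ => z - z₀) 1 v := (hasDerivAt_id v).sub_const z₀
    have h2 : HasDerivAt (fun z : ℂ => z - (starRingEnd ℂ) z₀) 1 v :=
      (hasDerivAt_id v).sub_const _
    exact h1.div h2 hvne
  have hcomp := (hφ.comp w hk).comp u hψ
  exact ⟨_, hcomp⟩

lemma ffun_diffOn (α c : ℝ) {z₀ : ℂ} (hz₀ : 0 < z₀.im) (hα1 : α < 1) :
    DifferentiableOn ℂ (ffun μ α c z₀) (ball (0 : ℂ) 1) := by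
  intro u hu
  obtain ⟨d, hd⟩ := ffun_hasDerivAt μ α c hz₀ hα1 hu
  exact hd.differentiableAt.differentiableWithinAt

lemma ffun_zero (α c : ℝ) {z₀ : ℂ} (hfix : kfun μ α c z₀ = z₀) : ffun μ α c z₀ 0 = 0 := by
  rw [ffun, psi_zero, hfix, phi_self]

lemma ffun_mapsTo (α c : ℝ) {z₀ : ℂ} (hz₀ : 0 < z₀.im) (hα1 : α < 1) :
    MapsTo (ffun μ α c z₀) (ball (0 : ℂ) 1) (ball (0 : ℂ) 1) := by
  intro u hu
  have h1 := psi_im_pos hz₀ hu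
  have h2 := k_im_pos μ α c hα1 h1
  exact phi_mem_ball hz₀ h2

lemma not_id_on_H {K : Set ℝ} (hK : IsCompact K) (hKc : μ Kᶜ = 0)
    (α c : ℝ) (hα0 : 0 < α) (hα1 : α < 1)
    (h : ∀ z : ℂ, 0 < z.im → (z - (c:ℂ)) * cauchyT μ z = ((1 - α : ℝ) : ℂ)) : False := by
  obtain ⟨M, hM⟩ := hK.isBounded.subset_closedBall 0
  set B : ℝ := (|c| + |M|) ^ 2 with hB
  have hBnn : 0 ≤ B := sq_nonneg _
  set y : ℝ := Real.sqrt ((1 - α) * B / α) + 1 with hy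
  have hsq : 0 ≤ (1 - α) * B / α := div_nonneg (mul_nonneg (by linarith) hBnn) hα0.le
  have hy0 : 0 < y := by positivity
  have hy2 : (1 - α) * B / α < y ^ 2 := by
    have h1 : Real.sqrt ((1 - α) * B / α) ^ 2 = (1 - α) * B / α := Real.sq_sqrt hsq
    nlinarith [Real.sqrt_nonneg ((1 - α) * B / α)]
  set z : ℂ := (c : ℂ) + Complex.I * y with hz
  have hzim : z.im = y := by simp [hz]
  have hzre : z.re = c := by simp [hz]
  have hzimpos : 0 < z.im := by rw [hzim]; exact hy0
  have heq := h z hzimpos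
  have hsub : z - (c : ℂ) = Complex.I * y := by rw [hz]; ring
  rw [hsub] at heq
  have hGim : (cauchyT μ z).im = -((1 - α) / y) := by
    have h1 := congrArg Complex.re heq
    have h2 : (Complex.I * (y:ℂ) * cauchyT μ z).re = -(y * (cauchyT μ z).im) := by
      simp [Complex.mul_re, Complex.mul_im]
    have h3 : ((1 - α : ℝ) : ℂ).re = 1 - α := by simp
    rw [h2, h3] at h1
    field_simp
    linarith
  have hbound : (cauchyT μ z).im ≤ -(y / (B + y ^ 2)) := by
    rw [im_cauchyT μ (ne_of_gt hzimpos)]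
    have hint : Integrable (fun x : ℝ => -(z.im / Complex.normSq (z - (x:ℂ)))) μ := by
      have h1 := (integrable_inv μ (ne_of_gt hzimpos)).im
      simp only [RCLike.im_to_complex] at h1
      have h2 : (fun x : ℝ => ((z - (x:ℂ))⁻¹).im)
          = fun x : ℝ => -(z.im / Complex.normSq (z - (x:ℂ))) := by
        funext x
        simp [Complex.inv_im, Complex.sub_im, Complex.ofReal_im, neg_div]
      rw [h2] at h1
      exact h1
    have hconst : ∫ _ : ℝ, -(y / (B + y ^ 2)) ∂μ = -(y / (B + y ^ 2)) := by
      simp [measure_univ]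
    rw [← hconst]
    refine integral_mono_ae hint (integrable_const _) ?_
    have hsubset : {x : ℝ | ¬ (-(z.im / Complex.normSq (z - (x:ℂ))) ≤ -(y / (B + y ^ 2)))}
        ⊆ Kᶜ := by
      intro x hx
      simp only [Set.mem_setOf_eq, not_le] at hx
      intro hxK
      apply absurd hx
      push_neg
      have hxM : |x| ≤ |M| := by
        have := hM hxK
        simp only [Metric.mem_closedBall, Real.dist_eq, sub_zero] at this
        exact this.trans (le_abs_self M)
      have hns : Complex.normSq (z - (x:ℂ)) = (c - x) ^ 2 + y ^ 2 := by
        rw [Complex.normSq_apply]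
        simp only [Complex.sub_re, Complex.sub_im, Complex.ofReal_re, Complex.ofReal_im,
          hzre, hzim, sub_zero]
        ring
      have hle : Complex.normSq (z - (x:ℂ)) ≤ B + y ^ 2 := by
        rw [hns, hB]
        have h1 : |c - x| ≤ |c| + |M| := by
          calc |c - x| ≤ |c| + |x| := abs_sub c x
          _ ≤ |c| + |M| := by linarith
        have h2 : (c - x) ^ 2 ≤ (|c| + |M|) ^ 2 := by
          nlinarith [le_abs_self (c - x), neg_abs_le (c - x), abs_nonneg (c - x)]
        linarith
      have hpos : 0 < Complex.normSq (z - (x:ℂ)) := by rw [hns]; positivity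
      rw [hzim]
      exact neg_le_neg (div_le_div_of_nonneg_left hy0.le hpos hle)
    exact (ae_iff.2 (measure_mono_null hsubset hKc))
  rw [hGim] at hbound
  have h5 : y / (B + y ^ 2) ≤ (1 - α) / y := neg_le_neg_iff.1 hbound
  have hp : (0:ℝ) < B + y ^ 2 := by positivity
  have h6 : y * y ≤ (1 - α) * (B + y ^ 2) := (div_le_div_iff₀ hp hy0).1 h5
  have hy2' : (1 - α) * B < y ^ 2 * α := (div_lt_iff₀ hα0).1 hy2
  nlinarith

lemma rigidity {K : Set ℝ} (hK : IsCompact K) (hKc : μ Kᶜ = 0)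
    (α c : ℝ) (hα0 : 0 < α) (hα1 : α < 1)
    {z₀ : ℂ} (hz₀ : 0 < z₀.im) (hfix : kfun μ α c z₀ = z₀)
    {u₀ : ℂ} (hu₀ : u₀ ∈ ball (0:ℂ) 1) (hds : dslope (ffun μ α c z₀) 0 u₀ = 1) : False := by
  have hfd := ffun_diffOn μ α c hz₀ hα1
  have hf0 := ffun_zero μ α c hfix
  have hmaps : MapsTo (ffun μ α c z₀) (ball 0 1) (ball (ffun μ α c z₀ 0) 1) := by
    rw [hf0]; exact ffun_mapsTo μ α c hz₀ hα1
  have heqOn := Complex.affine_of_mapsTo_ball_of_exists_norm_dslope_eq_div hfd (hmaps.mono_right ball_subset_closedBall) hu₀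
    (by rw [hds]; norm_num)
  have hid : ∀ u ∈ ball (0:ℂ) 1, ffun μ α c z₀ u = u := by
    intro u hu
    have h := heqOn hu
    rw [hf0, hds] at h
    simpa using h
  have hkid : ∀ z : ℂ, 0 < z.im → kfun μ α c z = z := by
    intro z hzpos
    have hu := phi_mem_ball hz₀ hzpos
    have h1 := hid _ hu
    rw [ffun, psi_phi hz₀ hzpos] at h1
    exact phi_inj hz₀ (k_im_pos μ α c hα1 hzpos) hzpos h1
  refine not_id_on_H μ hK hKc α c hα0 hα1 (fun z hzpos => ?_)
  have h1 := hkid z hzpos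
  rw [kfun] at h1
  have hGne := cauchyT_ne_zero μ hzpos
  have h2 : ((1 - α : ℝ) : ℂ) / cauchyT μ z = z - c := by linear_combination h1
  field_simp at h2
  have h3 : ((1 - α : ℝ) : ℂ) = 1 - (α:ℂ) := by push_cast; ring
  rw [h3]
  linear_combination -h2 + h3

theorem stmt1 (μ : Measure ℝ) [IsProbabilityMeasure μ]
    (hcomp : ∃ K : Set ℝ, IsCompact K ∧ μ Kᶜ = 0)
    (hnotpoint : ∀ t : ℝ, μ ≠ Measure.dirac t)
    (α : ℝ) (hα : α ∈ Set.Ioo (0 : ℝ) 1) (c : ℝ)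
    (hc : ∃ w : ℂ, w.im ≠ 0 ∧ w * cauchyT μ (w + c) = ((1 - α : ℝ) : ℂ)) :
    ∃ w₀ : ℂ, 0 < w₀.im ∧
      {w : ℂ | w.im ≠ 0 ∧ w * cauchyT μ (w + c) = ((1 - α : ℝ) : ℂ)}
        = {w₀, (starRingEnd ℂ) w₀} ∧
      -(∫ t : ℝ, ((w₀ + (c : ℂ) - (t : ℂ)) ^ 2)⁻¹ ∂μ) + ((1 - α : ℝ) : ℂ) / w₀ ^ 2 ≠ 0 := by
  obtain ⟨K, hK, hKc⟩ := hcomp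
  obtain ⟨hα0, hα1⟩ := hα
  have hrne : ((1 - α : ℝ) : ℂ) ≠ 0 := by
    simp only [ne_eq, Complex.ofReal_eq_zero]
    intro h; linarith
  have hrne' : (1 : ℂ) - (α : ℂ) ≠ 0 := by
    have := hrne; push_cast at this; exact this
  obtain ⟨w₁, hw₁im, hw₁eq⟩ := hc
  have hconj_sol : ∀ w : ℂ, w * cauchyT μ (w + c) = ((1-α:ℝ):ℂ) →
      (starRingEnd ℂ) w * cauchyT μ ((starRingEnd ℂ) w + c) = ((1-α:ℝ):ℂ) := by
    intro w hw
    have h1 : ((starRingEnd ℂ) w + (c:ℂ)) = (starRingEnd ℂ) (w + c) := by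
      rw [map_add, Complex.conj_ofReal]
    rw [h1, cauchyT_conj, ← map_mul, hw, Complex.conj_ofReal]
  obtain ⟨w₀, hw₀im, hw₀eq⟩ : ∃ w₀ : ℂ, 0 < w₀.im ∧
      w₀ * cauchyT μ (w₀ + c) = ((1-α:ℝ):ℂ) := by
    rcases lt_or_gt_of_ne hw₁im with h | h
    · exact ⟨(starRingEnd ℂ) w₁, by simpa [Complex.conj_im] using h, hconj_sol w₁ hw₁eq⟩
    · exact ⟨w₁, h, hw₁eq⟩
  set z₀ := w₀ + (c:ℂ) with hz₀def
  have hz₀im : 0 < z₀.im := by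
    rw [hz₀def]
    simpa [Complex.add_im, Complex.ofReal_im] using hw₀im
  have hGne : cauchyT μ z₀ ≠ 0 := cauchyT_ne_zero μ hz₀im
  have hw₀ne : w₀ ≠ 0 := by
    intro h; rw [h, zero_mul] at hw₀eq; exact hrne hw₀eq.symm
  have hGval : cauchyT μ z₀ = ((1-α:ℝ):ℂ) / w₀ := by
    rw [eq_div_iff hw₀ne]
    linear_combination hw₀eq
  have hfix : kfun μ α c z₀ = z₀ := by
    rw [kfun, hGval, hz₀def]
    congr 1
    field_simp
  have huniq : ∀ w : ℂ, 0 < w.im → w * cauchyT μ (w + c) = ((1-α:ℝ):ℂ) → w = w₀ := by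
    intro w hwim hweq
    by_contra hne
    have hzim : 0 < (w + (c:ℂ)).im := by
      simpa [Complex.add_im, Complex.ofReal_im] using hwim
    have hGne' : cauchyT μ (w + c) ≠ 0 := cauchyT_ne_zero μ hzim
    have hwne : w ≠ 0 := by
      intro h; rw [h, zero_mul] at hweq; exact hrne hweq.symm
    have hfix' : kfun μ α c (w + c) = w + c := by
      rw [kfun]
      have h1 : ((1-α:ℝ):ℂ) / cauchyT μ (w+c) = w := by
        rw [div_eq_iff hGne']
        linear_combination -hweq
      rw [h1]
    set a := phiM z₀ (w + (c:ℂ)) with ha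
    have haball : a ∈ ball (0:ℂ) 1 := phi_mem_ball hz₀im hzim
    have hane : a ≠ 0 := by
      rw [ha, Ne, phi_eq_zero_iff hz₀im hzim, hz₀def]
      intro h
      exact hne (by linear_combination h)
    have hfa : ffun μ α c z₀ a = a := by
      rw [ffun, ha, psi_phi hz₀im hzim, hfix']
    have hds : dslope (ffun μ α c z₀) 0 a = 1 := by
      rw [dslope_of_ne _ hane, slope_def_field, hfa, ffun_zero μ α c hfix]
      rw [sub_zero]
      exact div_self hane
    exact rigidity μ hK hKc α c hα0 hα1 hz₀im hfix haball hds
  refine ⟨w₀, hw₀im, ?_, ?_⟩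
  · ext w
    simp only [Set.mem_setOf_eq, Set.mem_insert_iff, Set.mem_singleton_iff]
    constructor
    · rintro ⟨hwim, hweq⟩
      rcases lt_or_gt_of_ne hwim with h | h
      · right
        have h1 := hconj_sol w hweq
        have h2 : 0 < ((starRingEnd ℂ) w).im := by simpa [Complex.conj_im] using h
        have h3 := huniq _ h2 h1
        rw [← h3, Complex.conj_conj]
      · left; exact huniq w h hweq
    · rintro (rfl | rfl)
      · exact ⟨ne_of_gt hw₀im, hw₀eq⟩
      · refine ⟨?_, hconj_sol w₀ hw₀eq⟩
        simp only [Complex.conj_im]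
        intro h
        have : w₀.im = 0 := by linarith
        exact (ne_of_gt hw₀im) this
  · -- nondegeneracy
    intro hcontra
    have hint_neg : (∫ x : ℝ, -(((z₀ - (x:ℂ)) ^ 2)⁻¹) ∂μ)
        = -(∫ t : ℝ, ((z₀ - (t:ℂ)) ^ 2)⁻¹ ∂μ) := integral_neg _
    have hg'val : (∫ x : ℝ, -(((z₀ - (x:ℂ)) ^ 2)⁻¹) ∂μ) = -(((1-α:ℝ):ℂ) / w₀^2) := by
      rw [hint_neg]
      have : -(∫ t : ℝ, ((z₀ - (t:ℂ)) ^ 2)⁻¹ ∂μ) + ((1 - α : ℝ) : ℂ) / w₀ ^ 2 = 0 := hcontra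
      linear_combination this
    have hk := k_hasDerivAt μ α c hz₀im
    rw [hg'val, hGval] at hk
    have hkval : -(((1 - α : ℝ) : ℂ) * -(((1-α:ℝ):ℂ) / w₀^2)) / (((1-α:ℝ):ℂ) / w₀)^2 = 1 := by
      rw [div_eq_one_iff_eq (pow_ne_zero 2 (div_ne_zero hrne hw₀ne))]
      field_simp
    rw [hkval] at hk
    -- build derivative of f at 0
    have hcne := conj_ne_self hz₀im
    have hψ : HasDerivAt (psiM z₀) (z₀ - (starRingEnd ℂ) z₀) 0 := by
      have hne1 : (1 : ℂ) - (0:ℂ) ≠ 0 := by norm_num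
      have h1 : HasDerivAt (fun v : ℂ => z₀ - (starRingEnd ℂ) z₀ * v)
          (-((starRingEnd ℂ) z₀)) 0 := by
        simpa using ((hasDerivAt_id (0:ℂ)).const_mul ((starRingEnd ℂ) z₀)).const_sub z₀
      have h2 : HasDerivAt (fun v : ℂ => 1 - v) (-1 : ℂ) 0 := by
        simpa using (hasDerivAt_id (0:ℂ)).const_sub (1 : ℂ)
      have h3 : HasDerivAt (psiM z₀) _ 0 := h1.div h2 hne1
      convert h3 using 1
      field_simp
      ring
    have hφ : HasDerivAt (phiM z₀) ((z₀ - (starRingEnd ℂ) z₀)⁻¹) z₀ := by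
      have h1 : HasDerivAt (fun z : ℂ => z - z₀) 1 z₀ := (hasDerivAt_id z₀).sub_const z₀
      have h2 : HasDerivAt (fun z : ℂ => z - (starRingEnd ℂ) z₀) 1 z₀ :=
        (hasDerivAt_id z₀).sub_const _
      have h3 : HasDerivAt (phiM z₀) _ z₀ := h1.div h2 hcne
      convert h3 using 1
      rw [sub_self]
      field_simp
      ring
    have hk0 : HasDerivAt (kfun μ α c) 1 (psiM z₀ 0) := by rw [psi_zero]; exact hk
    have hφ0 : HasDerivAt (phiM z₀) ((z₀ - (starRingEnd ℂ) z₀)⁻¹) (kfun μ α c (psiM z₀ 0)) := by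
      rw [psi_zero, hfix]; exact hφ
    have hf : HasDerivAt (phiM z₀ ∘ (kfun μ α c ∘ psiM z₀))
        ((z₀ - (starRingEnd ℂ) z₀)⁻¹ * (1 * (z₀ - (starRingEnd ℂ) z₀))) 0 :=
      hφ0.comp 0 (hk0.comp 0 hψ)
    have hf1 : HasDerivAt (ffun μ α c z₀) 1 0 := by
      have hff : phiM z₀ ∘ (kfun μ α c ∘ psiM z₀) = ffun μ α c z₀ := rfl
      rw [hff] at hf
      convert hf using 1
      field_simp
    have hds : dslope (ffun μ α c z₀) 0 0 = 1 := by
      rw [dslope_same]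
      exact hf1.deriv
    exact rigidity μ hK hKc α c hα0 hα1 hz₀im hfix (mem_ball_self one_pos) hds
end

section
/- Assume hypothesis (H), let c ∈ A_α, let w₀ be the unique element with Im(w₀) > 0 of {w ∈ ℂ ∖ ℝ : w·G_μ(w + c) = 1 − α}, let V ⊂ ℝ be compact, let ε ∈ (0, Im(w₀)) and let j ∈ ℕ. For n ∈ ℕ, v ∈ V and w with Im(w) > 0 define h_{n,v}(w) := (1/n)·Σ_{i=1}^n Log(w + c + v/n − x⁽ⁿ⁾ᵢ) − ((n − q_n)/n)·Log(w) and h(w) := ∫_ℝ Log(w + c − x) dμ(x) − (1 − α)·Log(w), where Log is the principal branch of the complex logarithm (these are well defined and holomorphic on the closed ball B̄(w₀, ε), since every point of this ball has positive imaginary part). Then lim_{n→∞} sup_{v∈V} sup_{w ∈ B̄(w₀, ε)} | h_{n,v}^{(j)}(w) − h^{(j)}(w) | = 0, where the superscript (j) denotes the j-th complex derivative. -/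
open MeasureTheory Filter Complex Topology

lemma logLip {d : ℝ} (hd : 0 < d) {z z' : ℂ} (hz : d ≤ z.im) (hz' : d ≤ z'.im) :
    ‖Complex.log z - Complex.log z'‖ ≤ ‖z - z'‖ / d := by
  have hconv : Convex ℝ {w : ℂ | d ≤ w.im} :=
    convex_halfSpace_ge ⟨fun _ _ => Complex.add_im _ _, fun r w => by simp⟩ d
  have key := hconv.norm_image_sub_le_of_norm_hasDerivWithin_le
    (f := Complex.log) (f' := fun w => w⁻¹) (C := 1/d) ?_ ?_ hz' hz
  · rw [div_eq_mul_inv, mul_comm]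
    simpa [one_div, div_eq_mul_inv] using key
  · intro w hw
    exact (Complex.hasDerivAt_log (Or.inr (by dsimp at hw; linarith))).hasDerivWithinAt
  · intro w hw
    rw [norm_inv, one_div]
    apply inv_anti₀ hd
    calc d ≤ w.im := hw
    _ ≤ |w.im| := le_abs_self _
    _ ≤ ‖w‖ := Complex.abs_im_le_norm w
    _ = ‖w‖ := rfl

lemma logContR {z : ℂ} (hz : 0 < z.im) : Continuous (fun t : ℝ => Complex.log (z - t)) := by
  rw [continuous_iff_continuousAt]
  intro t
  apply (continuousAt_clog ?_).comp
  · exact (continuous_const.sub Complex.continuous_ofReal).continuousAt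
  · exact Or.inr (by simp [Complex.sub_im]; linarith)

lemma pointwise_core (a b : ℝ) (hab : a ≤ b) (x : (n : ℕ) → Fin n → ℝ)
    (hx_mem : ∀ n, ∀ i : Fin n, x n i ∈ Set.Icc a b)
    (μ : Measure ℝ) [IsProbabilityMeasure μ]
    (hsupp : μ (Set.Icc a b)ᶜ = 0)
    (hweak : ∀ f : BoundedContinuousFunction ℝ ℝ,
      Tendsto (fun n : ℕ => (∑ i : Fin n, f (x n i)) / n) atTop (nhds (∫ t, f t ∂μ)))
    {z : ℂ} (hz : 0 < z.im) :
    Integrable (fun t : ℝ => Complex.log (z - t)) μ ∧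
      Tendsto (fun n : ℕ => (∑ i : Fin n, Complex.log (z - x n i)) / (n : ℂ)) atTop
        (𝓝 (∫ t, Complex.log (z - t) ∂μ)) := by
  set pr : ℝ → ℝ := fun t => max a (min b t) with hprdef
  have hprc : Continuous pr := continuous_const.max (continuous_const.min continuous_id)
  have hprm : ∀ t, pr t ∈ Set.Icc a b := fun t => ⟨le_max_left _ _, max_le hab (min_le_left _ _)⟩
  have hpr_id : ∀ t ∈ Set.Icc a b, pr t = t := fun t ht => by
    simp only [hprdef, min_eq_right ht.2, max_eq_right ht.1]
  set g : ℝ → ℂ := fun t => Complex.log (z - pr t) with hgdef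
  have hgc : Continuous g := (logContR hz).comp hprc
  obtain ⟨C, hC⟩ := (isCompact_Icc (a := a) (b := b)).exists_bound_of_continuousOn
    (logContR hz).continuousOn
  have hgb : ∀ t, ‖g t‖ ≤ C := fun t => hC _ (hprm t)
  have hGint : Integrable g μ :=
    (BoundedContinuousFunction.ofNormedAddCommGroup g hgc C hgb).integrable μ
  have hae : ∀ᵐ t ∂μ, t ∈ Set.Icc a b := by
    rw [ae_iff]
    convert hsupp using 2
    exact rfl
  have haeq : (fun t : ℝ => Complex.log (z - t)) =ᵐ[μ] g :=
    hae.mono fun t ht => by rw [hgdef]; simp only [hpr_id t ht]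
  have hint : Integrable (fun t : ℝ => Complex.log (z - t)) μ := hGint.congr haeq.symm
  have hieq : ∫ t, Complex.log (z - t) ∂μ = ∫ t, g t ∂μ := integral_congr_ae haeq
  refine ⟨hint, ?_⟩
  set fre := BoundedContinuousFunction.ofNormedAddCommGroup (fun t => (g t).re)
    (Complex.continuous_re.comp hgc) C
    (fun t => by simpa [Real.norm_eq_abs] using (Complex.abs_re_le_norm (g t)).trans (hgb t))
    with hfre
  set fim := BoundedContinuousFunction.ofNormedAddCommGroup (fun t => (g t).im)
    (Complex.continuous_im.comp hgc) C
    (fun t => by simpa [Real.norm_eq_abs] using (Complex.abs_im_le_norm (g t)).trans (hgb t))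
    with hfim
  have h1 := hweak fre
  have h2 := hweak fim
  have key : ∀ n : ℕ, (∑ i : Fin n, Complex.log (z - x n i)) / (n : ℂ)
      = (((∑ i : Fin n, fre (x n i)) / n : ℝ) : ℂ)
        + (((∑ i : Fin n, fim (x n i)) / n : ℝ) : ℂ) * Complex.I := by
    intro n
    have hterm : ∀ i : Fin n, Complex.log (z - x n i)
        = ((fre (x n i) : ℝ) : ℂ) + ((fim (x n i) : ℝ) : ℂ) * Complex.I := by
      intro i
      have hx := hpr_id _ (hx_mem n i)
      simp only [hfre, hfim, BoundedContinuousFunction.coe_ofNormedAddCommGroup, hgdef, hx,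
        Complex.re_add_im]
    rw [Finset.sum_congr rfl (fun i _ => hterm i)]
    push_cast
    rw [Finset.sum_add_distrib, ← Finset.sum_mul]
    ring
  simp only [key]
  have hlim : Tendsto (fun n : ℕ => (((∑ i : Fin n, fre (x n i)) / n : ℝ) : ℂ)
      + (((∑ i : Fin n, fim (x n i)) / n : ℝ) : ℂ) * Complex.I) atTop
      (𝓝 ((((∫ t, fre t ∂μ) : ℝ) : ℂ) + (((∫ t, fim t ∂μ) : ℝ) : ℂ) * Complex.I)) :=
    ((Complex.continuous_ofReal.tendsto _).comp h1).add
      (((Complex.continuous_ofReal.tendsto _).comp h2).mul_const Complex.I)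
  have hfinal : ((((∫ t, fre t ∂μ) : ℝ) : ℂ) + (((∫ t, fim t ∂μ) : ℝ) : ℂ) * Complex.I)
      = ∫ t, Complex.log (z - t) ∂μ := by
    rw [hieq]
    have := integral_re_add_im (𝕜 := ℂ) hGint
    simpa [hfre, hfim] using this
  rwa [hfinal] at hlim

lemma sum_log_lip (d : ℝ) (hd : 0 < d) (n : ℕ) (xx : Fin n → ℝ) {w y : ℂ}
    (hw : d < w.im) (hy : d < y.im) :
    dist ((∑ i : Fin n, Complex.log (w - xx i)) / (n : ℂ))
      ((∑ i : Fin n, Complex.log (y - xx i)) / (n : ℂ)) ≤ ‖w - y‖ / d := by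
  have hB : 0 ≤ ‖w - y‖ / d := by positivity
  rcases Nat.eq_zero_or_pos n with rfl | hn
  · simpa using hB
  have hn' : (0 : ℝ) < n := Nat.cast_pos.2 hn
  rw [dist_eq_norm, div_sub_div_same, ← Finset.sum_sub_distrib, norm_div,
    Complex.norm_natCast]
  have hterm : ∀ i : Fin n, ‖Complex.log (w - xx i) - Complex.log (y - xx i)‖ ≤ ‖w - y‖ / d := by
    intro i
    have h1 : d ≤ (w - (xx i : ℂ)).im := by simp [Complex.sub_im]; linarith
    have h2 : d ≤ (y - (xx i : ℂ)).im := by simp [Complex.sub_im]; linarith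
    have := logLip hd h1 h2
    have heq : (w - (xx i : ℂ)) - (y - (xx i : ℂ)) = w - y := by ring
    rwa [heq] at this
  calc ‖∑ i : Fin n, (Complex.log (w - xx i) - Complex.log (y - xx i))‖ / (n : ℝ)
      ≤ ((n : ℝ) * (‖w - y‖ / d)) / (n : ℝ) := by
        gcongr
        exact (norm_sum_le _ _).trans
          (by simpa using Finset.sum_le_card_nsmul Finset.univ _ _ (fun i _ => hterm i))
    _ = ‖w - y‖ / d := mul_div_cancel_left₀ _ (ne_of_gt hn')

lemma unif_core (a b : ℝ) (hab : a ≤ b) (x : (n : ℕ) → Fin n → ℝ)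
    (hx_mem : ∀ n, ∀ i : Fin n, x n i ∈ Set.Icc a b)
    (μ : Measure ℝ) [IsProbabilityMeasure μ]
    (hsupp : μ (Set.Icc a b)ᶜ = 0)
    (hweak : ∀ f : BoundedContinuousFunction ℝ ℝ,
      Tendsto (fun n : ℕ => (∑ i : Fin n, f (x n i)) / n) atTop (nhds (∫ t, f t ∂μ)))
    {d : ℝ} (hd : 0 < d) {K : Set ℂ} (hK : IsCompact K) (hKd : ∀ w ∈ K, d < w.im) :
    TendstoUniformlyOn (fun (n : ℕ) (w : ℂ) => (∑ i : Fin n, Complex.log (w - x n i)) / (n : ℂ))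
      (fun w => ∫ t, Complex.log (w - t) ∂μ) atTop K := by
  have hIpt : ∀ w ∈ K, Integrable (fun t : ℝ => Complex.log (w - t)) μ := fun w hw =>
    (pointwise_core a b hab x hx_mem μ hsupp hweak (lt_trans hd (hKd w hw))).1
  have gLip : ∀ w ∈ K, ∀ y ∈ K,
      dist (∫ t, Complex.log (w - t) ∂μ) (∫ t, Complex.log (y - t) ∂μ) ≤ ‖w - y‖ / d := by
    intro w hw y hy
    rw [dist_eq_norm, ← integral_sub (hIpt w hw) (hIpt y hy)]
    have hbd : ∀ t : ℝ, ‖Complex.log (w - t) - Complex.log (y - t)‖ ≤ ‖w - y‖ / d := by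
      intro t
      have h1 : d ≤ (w - (t : ℂ)).im := by
        simp only [Complex.sub_im, Complex.ofReal_im, sub_zero]; exact (hKd w hw).le
      have h2 : d ≤ (y - (t : ℂ)).im := by
        simp only [Complex.sub_im, Complex.ofReal_im, sub_zero]; exact (hKd y hy).le
      have := logLip hd h1 h2
      have heq : (w - (t : ℂ)) - (y - (t : ℂ)) = w - y := by ring
      rwa [heq] at this
    calc ‖∫ t, (Complex.log (w - t) - Complex.log (y - t)) ∂μ‖
        ≤ ∫ _t : ℝ, (‖w - y‖ / d) ∂μ :=
          norm_integral_le_of_norm_le (integrable_const _) (ae_of_all _ hbd)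
      _ = ‖w - y‖ / d := by simp
  rw [Metric.tendstoUniformlyOn_iff]
  intro δ hδ
  set r := d * δ / 4 with hr
  have hrpos : 0 < r := by positivity
  obtain ⟨s, hsK, hcov⟩ := hK.elim_nhds_subcover (fun y => Metric.ball y r)
      (fun y _ => Metric.ball_mem_nhds y hrpos)
  have hev : ∀ᶠ n in atTop, ∀ y ∈ s,
      dist (∫ t, Complex.log (y - t) ∂μ) ((∑ i : Fin n, Complex.log (y - x n i)) / (n : ℂ))
        < δ / 4 := by
    rw [eventually_all_finset]
    intro y hy
    have hten := (pointwise_core a b hab x hx_mem μ hsupp hweak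
      (lt_trans hd (hKd y (hsK y hy)))).2
    have := Metric.tendsto_nhds.1 hten (δ / 4) (by positivity)
    filter_upwards [this] with n hn
    rw [dist_comm]; exact hn
  filter_upwards [hev] with n hn w hw
  obtain ⟨y, hys, hywr⟩ : ∃ y ∈ s, w ∈ Metric.ball y r := by
    have := hcov hw
    simpa using this
  have hyK : y ∈ K := hsK y hys
  have hdist : ‖w - y‖ / d < δ / 4 := by
    have h1 : ‖w - y‖ < r := by rw [← dist_eq_norm]; exact Metric.mem_ball.1 hywr
    have : ‖w - y‖ / d < r / d := by gcongr
    have hrd : r / d = δ / 4 := by rw [hr]; field_simp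
    rwa [hrd] at this
  have t1 := gLip w hw y hyK
  have t2 := hn y hys
  have t3 := sum_log_lip d hd n (x n) (hKd y hyK) (hKd w hw)
  calc dist (∫ t, Complex.log (w - t) ∂μ) ((∑ i : Fin n, Complex.log (w - x n i)) / (n : ℂ))
      ≤ dist (∫ t, Complex.log (w - t) ∂μ) (∫ t, Complex.log (y - t) ∂μ)
        + dist (∫ t, Complex.log (y - t) ∂μ) ((∑ i : Fin n, Complex.log (y - x n i)) / (n : ℂ))
        + dist ((∑ i : Fin n, Complex.log (y - x n i)) / (n : ℂ))
            ((∑ i : Fin n, Complex.log (w - x n i)) / (n : ℂ)) := dist_triangle4 _ _ _ _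
    _ < δ / 4 + δ / 4 + δ / 4 := by
        apply add_lt_add (add_lt_add_of_lt_of_lt (t1.trans_lt hdist) t2)
        have hnorm : ‖y - w‖ = ‖w - y‖ := by rw [norm_sub_rev]
        exact (t3.trans (by rw [hnorm])).trans_lt hdist
    _ < δ := by linarith

theorem stmt3 (a b : ℝ) (hab : a < b) (q : ℕ → ℕ) (x : (n : ℕ) → Fin n → ℝ)
    (hq : ∀ n, 1 ≤ n → 1 ≤ q n ∧ q n ≤ n)
    (hx_mem : ∀ n, ∀ i : Fin n, x n i ∈ Set.Icc a b)
    (hx_dec : ∀ n, StrictAnti (x n))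
    (μ : Measure ℝ) [IsProbabilityMeasure μ]
    (hsupp : μ (Set.Icc a b)ᶜ = 0)
    (hnotpoint : ∀ t : ℝ, μ ≠ Measure.dirac t)
    (hweak : ∀ f : BoundedContinuousFunction ℝ ℝ,
      Tendsto (fun n : ℕ => (∑ i : Fin n, f (x n i)) / n) atTop (nhds (∫ t, f t ∂μ)))
    (α : ℝ) (hα : α ∈ Set.Ioo (0 : ℝ) 1)
    (hqlim : Tendsto (fun n : ℕ => (q n : ℝ) / n) atTop (nhds α))
    (c : ℝ)
    (w₀ : ℂ) (hw₀ : 0 < w₀.im)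
    (hset : {w : ℂ | w.im ≠ 0 ∧ w * cauchyT μ (w + c) = ((1 - α : ℝ) : ℂ)}
      = {w₀, (starRingEnd ℂ) w₀})
    (V : Set ℝ) (hV : IsCompact V)
    (ε : ℝ) (hε : ε ∈ Set.Ioo 0 w₀.im) (j : ℕ) :
    let hn : ℕ → ℝ → ℂ → ℂ := fun n v w =>
      (1 / (n : ℂ)) * (∑ i : Fin n, Complex.log (w + (c : ℂ) + (v : ℂ) / n - (x n i : ℂ)))
        - (((n : ℂ) - (q n : ℂ)) / (n : ℂ)) * Complex.log w
    let h : ℂ → ℂ := fun w =>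
      (∫ t : ℝ, Complex.log (w + (c : ℂ) - (t : ℂ)) ∂μ) - ((1 - α : ℝ) : ℂ) * Complex.log w
    ∀ δ > 0, ∃ N : ℕ, ∀ n ≥ N, ∀ v ∈ V, ∀ w ∈ Metric.closedBall w₀ ε,
      ‖iteratedDeriv j (hn n v) w - iteratedDeriv j h w‖ < δ := by
  intro hn h δ hδ
  rcases Set.eq_empty_or_nonempty V with rfl | hVne
  · exact ⟨0, fun n _ v hv => absurd hv (Set.notMem_empty v)⟩
  haveI hPne : (𝓟 V).NeBot := Filter.principal_neBot_iff.mpr hVne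
  obtain ⟨M, hM⟩ := isBounded_iff_forall_norm_le.1 hV.isBounded
  set d : ℝ := w₀.im - ε with hdd
  have hdpos : 0 < d := by have := hε.2; simp only [hdd]; linarith
  set U : Set ℂ := {w : ℂ | d / 2 < w.im} with hUdef
  have hUopen : IsOpen U := isOpen_lt continuous_const Complex.continuous_im
  have hball : Metric.closedBall w₀ ε ⊆ U := by
    intro w hw
    have h1 : ‖w - w₀‖ ≤ ε := by rwa [← dist_eq_norm, ← Metric.mem_closedBall]
    have h2 : |w.im - w₀.im| ≤ ε := by
      have := (Complex.abs_im_le_norm (w - w₀)).trans h1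
      simpa [Complex.sub_im] using this
    have := abs_le.1 h2
    simp only [hUdef, Set.mem_setOf_eq]
    have := this.1
    simp only [hdd]
    linarith
  set φ : Filter (ℕ × ℝ) := atTop ×ˢ 𝓟 V with hφdef
  haveI hφne : φ.NeBot := Filter.prod_neBot.mpr ⟨inferInstance, inferInstance⟩
  set F : ℕ × ℝ → ℂ → ℂ := fun p => hn p.1 p.2 with hFdef
  -- main locally uniform convergence
  have hTLU : TendstoLocallyUniformlyOn F h φ U := by
    rw [tendstoLocallyUniformlyOn_iff_forall_isCompact hUopen]
    intro K hKU hK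
    have hKim : ∀ w ∈ K, d / 2 < w.im := fun w hw => hKU hw
    obtain ⟨L, hL⟩ := hK.exists_bound_of_continuousOn (f := Complex.log)
      (fun w hw => (continuousAt_clog
        (Or.inr (ne_of_gt (lt_trans (by positivity) (hKim w hw))))).continuousWithinAt)
    set L' : ℝ := max L 0 with hL'def
    have hL' : ∀ w ∈ K, ‖Complex.log w‖ ≤ L' := fun w hw => (hL w hw).trans (le_max_left _ _)
    have hL'0 : 0 ≤ L' := le_max_right _ _
    -- translated compact set
    set K' : Set ℂ := (fun w : ℂ => w + (c : ℂ)) '' K with hK'def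
    have hK'c : IsCompact K' := hK.image (continuous_id.add continuous_const)
    have hK'im : ∀ z ∈ K', d / 2 < z.im := by
      rintro z ⟨w, hw, rfl⟩
      simpa [Complex.add_im] using hKim w hw
    have hcore := unif_core a b hab.le x hx_mem μ hsupp hweak (half_pos hdpos) hK'c hK'im
    have hT1seq : TendstoUniformlyOn
        (fun (n : ℕ) (w : ℂ) => (∑ i : Fin n, Complex.log (w + (c : ℂ) - x n i)) / (n : ℂ))
        (fun w => ∫ t, Complex.log (w + (c : ℂ) - t) ∂μ) atTop K := by
      have hsub : K ⊆ (fun w : ℂ => w + (c : ℂ)) ⁻¹' K' := fun w hw => ⟨w, hw, rfl⟩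
      have := (hcore.comp (fun w : ℂ => w + (c : ℂ))).mono hsub
      exact this
    rw [Metric.tendstoUniformlyOn_iff]
    intro δ' hδ'
    have E1 := Metric.tendstoUniformlyOn_iff.1 hT1seq (δ' / 3) (by positivity)
    have E2 : ∀ᶠ n : ℕ in atTop, M / n / (d / 2) < δ' / 3 := by
      have h0 : Tendsto (fun n : ℕ => M / n / (d / 2)) atTop (𝓝 0) := by
        have := (tendsto_const_div_atTop_nhds_zero_nat M).div_const (d / 2)
        simpa using this
      exact h0.eventually (gt_mem_nhds (by positivity))
    have E3 : ∀ᶠ n : ℕ in atTop, |(q n : ℝ) / n - α| < δ' / (3 * (L' + 1)) := by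
      have := Metric.tendsto_nhds.1 hqlim (δ' / (3 * (L' + 1))) (by positivity)
      simpa [Real.dist_eq] using this
    have E4 : ∀ᶠ n : ℕ in atTop, 1 ≤ n := eventually_ge_atTop 1
    filter_upwards [E1.prod_inl (𝓟 V), E2.prod_inl (𝓟 V), E3.prod_inl (𝓟 V),
      E4.prod_inl (𝓟 V), (eventually_principal.mpr (fun v (hv : v ∈ V) => hv)).prod_inr atTop]
      with p h1 h2 h3 h4 h5 w hw
    obtain ⟨n, v⟩ := p
    dsimp only at h1 h2 h3 h4 h5
    have hn0 : (n : ℂ) ≠ 0 := Nat.cast_ne_zero.2 (by omega)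
    have hwim : d / 2 < w.im := hKim w hw
    -- abbreviations
    set Iw : ℂ := ∫ t, Complex.log (w + (c : ℂ) - t) ∂μ with hIw
    set An : ℂ := (∑ i : Fin n, Complex.log (w + (c : ℂ) - x n i)) / (n : ℂ) with hAn
    set At : ℂ := (1 / (n : ℂ)) *
      (∑ i : Fin n, Complex.log (w + (c : ℂ) + (v : ℂ) / n - x n i)) with hAt
    set Cw : ℂ := ((1 - α : ℝ) : ℂ) * Complex.log w with hCw
    set Cn : ℂ := (((n : ℂ) - (q n : ℂ)) / (n : ℂ)) * Complex.log w with hCn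
    have hhw : h w = Iw - Cw := rfl
    have hFw : F (n, v) w = At - Cn := rfl
    have t1 : dist Iw An < δ' / 3 := h1 w hw
    have t2 : dist An At < δ' / 3 := by
      have hAt' : At = (∑ i : Fin n, Complex.log (w + (c : ℂ) + (v : ℂ) / n - x n i)) / (n : ℂ) :=
        one_div_mul_eq_div _ _
      have him2 : d / 2 < (w + (c : ℂ) + (v : ℂ) / n).im := by
        have : w + (c : ℂ) + (v : ℂ) / n = w + ((c + v / n : ℝ) : ℂ) := by push_cast; ring
        rw [this]
        simpa [Complex.add_im] using hwim
      have him1 : d / 2 < (w + (c : ℂ)).im := by simpa [Complex.add_im] using hwim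
      have hlip := sum_log_lip (d / 2) (half_pos hdpos) n (x n) him1 him2
      have hnorm : ‖(w + (c : ℂ)) - (w + (c : ℂ) + (v : ℂ) / n)‖ = |v| / n := by
        have : (w + (c : ℂ)) - (w + (c : ℂ) + (v : ℂ) / n) = -((v : ℂ) / n) := by ring
        rw [this, norm_neg, norm_div, Complex.norm_real, Complex.norm_natCast,
          Real.norm_eq_abs]
      rw [hAn, hAt']
      refine lt_of_le_of_lt (le_trans hlip ?_) h2
      rw [hnorm]
      gcongr
      simpa [Real.norm_eq_abs] using hM v h5
    have t3 : dist Cw Cn < δ' / 3 := by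
      rw [hCw, hCn, dist_eq_norm, ← sub_mul, norm_mul]
      have hfac : ((1 - α : ℝ) : ℂ) - ((n : ℂ) - (q n : ℂ)) / (n : ℂ)
          = (((q n : ℝ) / (n : ℝ) - α : ℝ) : ℂ) := by
        push_cast
        rw [sub_div, div_self hn0]
        ring
      rw [hfac, Complex.norm_real, Real.norm_eq_abs]
      calc |(q n : ℝ) / n - α| * ‖Complex.log w‖
          ≤ |(q n : ℝ) / n - α| * (L' + 1) := by
            gcongr
            exact (hL' w hw).trans (by linarith)
        _ < (δ' / (3 * (L' + 1))) * (L' + 1) := by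
            apply mul_lt_mul_of_pos_right h3 (by linarith)
        _ = δ' / 3 := by field_simp
    calc dist (h w) (F (n, v) w) = dist (Iw - Cw) (At - Cn) := by rw [hhw, hFw]
      _ ≤ dist (Iw - Cw) (An - Cw) + dist (An - Cw) (At - Cw) + dist (At - Cw) (At - Cn) :=
          dist_triangle4 _ _ _ _
      _ = dist Iw An + dist An At + dist Cw Cn := by
          rw [dist_sub_right, dist_sub_right, dist_sub_left]
      _ < δ' / 3 + δ' / 3 + δ' / 3 := add_lt_add (add_lt_add t1 t2) t3
      _ = δ' := by ring
  -- differentiability of the approximants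
  have hFdiff : ∀ p : ℕ × ℝ, DifferentiableOn ℂ (F p) U := by
    intro p w hw
    have hwim : 0 < w.im := lt_trans (by positivity) (hw : d / 2 < w.im)
    apply DifferentiableAt.differentiableWithinAt
    apply DifferentiableAt.sub
    · apply DifferentiableAt.const_mul
      apply DifferentiableAt.fun_sum
      intro i _
      have hmem : w + (c : ℂ) + (p.2 : ℂ) / p.1 - (x p.1 i : ℂ) ∈ Complex.slitPlane := by
        refine Or.inr ?_
        have : w + (c : ℂ) + (p.2 : ℂ) / p.1 - (x p.1 i : ℂ)
            = w + ((c + p.2 / p.1 - x p.1 i : ℝ) : ℂ) := by push_cast; ring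
        rw [this]
        simpa [Complex.add_im] using ne_of_gt hwim
      exact DifferentiableAt.clog
        (((differentiableAt_id.add_const _).add_const _).sub_const _) hmem
    · exact ((differentiableAt_id.clog (Or.inr (ne_of_gt hwim)))).const_mul _
  have hhdiff : DifferentiableOn ℂ h U :=
    hTLU.differentiableOn (Eventually.of_forall hFdiff) hUopen
  have hFit : ∀ (k : ℕ) (p : ℕ × ℝ), DifferentiableOn ℂ (iteratedDeriv k (F p)) U := by
    intro k p
    rw [iteratedDeriv_eq_iterate]
    exact (((hFdiff p).analyticOnNhd hUopen).iterated_deriv k).differentiableOn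
  have claim : ∀ k : ℕ, TendstoLocallyUniformlyOn
      (fun p => iteratedDeriv k (F p)) (iteratedDeriv k h) φ U := by
    intro k
    induction k with
    | zero => simpa [iteratedDeriv_zero] using hTLU
    | succ k ih =>
      have := ih.deriv (Eventually.of_forall (fun p => hFit k p)) hUopen
      have heq : (deriv ∘ fun p => iteratedDeriv k (F p))
          = fun p => iteratedDeriv (k + 1) (F p) := by
        funext p
        simp [Function.comp, iteratedDeriv_succ]
      rw [heq] at this
      rw [iteratedDeriv_succ]
      exact this
  have hTUO := (tendstoLocallyUniformlyOn_iff_forall_isCompact hUopen).1 (claim j)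
    (Metric.closedBall w₀ ε) hball (isCompact_closedBall _ _)
  have hev := Metric.tendstoUniformlyOn_iff.1 hTUO δ hδ
  rw [hφdef, eventually_prod_iff] at hev
  obtain ⟨pa, hpa, pb, hpb, hcomb⟩ := hev
  obtain ⟨N, hN⟩ := eventually_atTop.1 hpa
  refine ⟨N, fun n hnN v hv w hw => ?_⟩
  have := hcomb (hN n hnN) (eventually_principal.1 hpb v hv) w hw
  rw [dist_comm] at this
  rw [← dist_eq_norm]
  exact this
end

section
/- Let μ be a Borel probability measure on ℝ with compact support which is not a point mass, let α ∈ (0,1), c ∈ ℝ, and let w ∈ ℂ ∖ ℝ satisfy w·G_μ(w + c) = 1 − α. Then ∫_ℝ (c − x)/|w + c − x|² dμ(x) = 0 and ∫_ℝ |w|²/|w + c − x|² dμ(x) = 1 − α. -/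
open MeasureTheory Complex

theorem stmt4 (μ : Measure ℝ) [IsProbabilityMeasure μ]
    (hcomp : ∃ K : Set ℝ, IsCompact K ∧ μ Kᶜ = 0)
    (hnotpoint : ∀ t : ℝ, μ ≠ Measure.dirac t)
    (α : ℝ) (hα : α ∈ Set.Ioo (0 : ℝ) 1) (c : ℝ)
    (w : ℂ) (hw : w.im ≠ 0)
    (heq : w * cauchyT μ (w + c) = ((1 - α : ℝ) : ℂ)) :
    (∫ t : ℝ, (c - t) / ‖w + (c : ℂ) - (t : ℂ)‖ ^ 2 ∂μ) = 0 ∧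
    (∫ t : ℝ, ‖w‖ ^ 2 / ‖w + (c : ℂ) - (t : ℂ)‖ ^ 2 ∂μ) = 1 - α := by
  have hz : ∀ t : ℝ, (w + (c : ℂ) - (t : ℂ)) ≠ 0 := by
    intro t h
    apply hw
    have := congrArg Complex.im h
    simpa using this
  have hcont : Continuous fun t : ℝ => (w + (c : ℂ) - (t : ℂ))⁻¹ :=
    (continuous_const.sub Complex.continuous_ofReal).inv₀ hz
  have hint : Integrable (fun t : ℝ => (w + (c : ℂ) - (t : ℂ))⁻¹) μ := by
    refine Integrable.mono' (integrable_const (|w.im|⁻¹)) hcont.aestronglyMeasurable ?_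
    filter_upwards with t
    rw [norm_inv]
    refine inv_anti₀ (abs_pos.mpr hw) ?_
    have h1 : |(w + (c : ℂ) - (t : ℂ)).im| ≤ ‖w + (c : ℂ) - (t : ℂ)‖ :=
      Complex.abs_im_le_norm _
    simpa using h1
  have hg : Integrable (fun t : ℝ => w * (w + (c : ℂ) - (t : ℂ))⁻¹) μ := hint.const_mul w
  have heq' : ∫ t : ℝ, w * (w + (c : ℂ) - (t : ℂ))⁻¹ ∂μ = ((1 - α : ℝ) : ℂ) := by
    rw [MeasureTheory.integral_const_mul]
    exact heq
  -- pointwise identities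
  have keyim : ∀ t : ℝ, (w * (w + (c : ℂ) - (t : ℂ))⁻¹).im
      = w.im * ((c - t) / ‖w + (c : ℂ) - (t : ℂ)‖ ^ 2) := by
    intro t
    rw [← div_eq_mul_inv, Complex.div_im, Complex.sq_norm]
    have hre : (w + (c : ℂ) - (t : ℂ)).re = w.re + c - t := by simp
    have him : (w + (c : ℂ) - (t : ℂ)).im = w.im := by simp
    rw [hre, him]
    field_simp
    ring
  have keyre : ∀ t : ℝ, (w * (w + (c : ℂ) - (t : ℂ))⁻¹).re
      = ‖w‖ ^ 2 / ‖w + (c : ℂ) - (t : ℂ)‖ ^ 2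
        + w.re * ((c - t) / ‖w + (c : ℂ) - (t : ℂ)‖ ^ 2) := by
    intro t
    rw [← div_eq_mul_inv, Complex.div_re, Complex.sq_norm, Complex.sq_norm,
      Complex.normSq_apply w]
    have hre : (w + (c : ℂ) - (t : ℂ)).re = w.re + c - t := by simp
    have him : (w + (c : ℂ) - (t : ℂ)).im = w.im := by simp
    rw [hre, him]
    field_simp
    ring
  have hgre : Integrable (fun t : ℝ => (w * (w + (c : ℂ) - (t : ℂ))⁻¹).re) μ := hg.re
  have hImInt : ∫ t : ℝ, (w * (w + (c : ℂ) - (t : ℂ))⁻¹).im ∂μ = 0 := by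
    have h := integral_im hg
    rw [heq'] at h
    simpa only [RCLike.im_to_complex, Complex.ofReal_im] using h
  have hReInt : ∫ t : ℝ, (w * (w + (c : ℂ) - (t : ℂ))⁻¹).re ∂μ = 1 - α := by
    have h := integral_re hg
    rw [heq'] at h
    simpa only [RCLike.re_to_complex, Complex.ofReal_re] using h
  have h1 : (∫ t : ℝ, (c - t) / ‖w + (c : ℂ) - (t : ℂ)‖ ^ 2 ∂μ) = 0 := by
    have hfun : (fun t : ℝ => (c - t) / ‖w + (c : ℂ) - (t : ℂ)‖ ^ 2)
        = fun t : ℝ => w.im⁻¹ * (w * (w + (c : ℂ) - (t : ℂ))⁻¹).im := by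
      funext t
      rw [keyim t]
      field_simp
    rw [hfun, MeasureTheory.integral_const_mul, hImInt, mul_zero]
  refine ⟨h1, ?_⟩
  have hfun2 : (fun t : ℝ => ‖w‖ ^ 2 / ‖w + (c : ℂ) - (t : ℂ)‖ ^ 2)
      = fun t : ℝ => (w * (w + (c : ℂ) - (t : ℂ))⁻¹).re
        - w.re * ((c - t) / ‖w + (c : ℂ) - (t : ℂ)‖ ^ 2) := by
    funext t
    rw [keyre t]
    ring
  have hintim : Integrable (fun t : ℝ => (c - t) / ‖w + (c : ℂ) - (t : ℂ)‖ ^ 2) μ := by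
    have hfun : (fun t : ℝ => (c - t) / ‖w + (c : ℂ) - (t : ℂ)‖ ^ 2)
        = fun t : ℝ => w.im⁻¹ * (w * (w + (c : ℂ) - (t : ℂ))⁻¹).im := by
      funext t
      rw [keyim t]
      field_simp
    rw [hfun]
    exact hg.im.const_mul _
  rw [hfun2, MeasureTheory.integral_sub hgre (hintim.const_mul w.re),
    MeasureTheory.integral_const_mul, hReInt, h1, mul_zero, sub_zero]
end

section
/- Let μ be a Borel probability measure on ℝ with compact support which is not a point mass, let α ∈ (0,1), c ∈ ℝ, and suppose there exists w ∈ ℂ ∖ ℝ with w·G_μ(w + c) = 1 − α. Then μ({c}) < 1 − α. -/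
open MeasureTheory Complex

theorem stmt5 (μ : Measure ℝ) [IsProbabilityMeasure μ]
    (hcomp : ∃ K : Set ℝ, IsCompact K ∧ μ Kᶜ = 0)
    (hnotpoint : ∀ t : ℝ, μ ≠ Measure.dirac t)
    (α : ℝ) (hα : α ∈ Set.Ioo (0 : ℝ) 1) (c : ℝ)
    (hc : ∃ w : ℂ, w.im ≠ 0 ∧ w * cauchyT μ (w + c) = ((1 - α : ℝ) : ℂ)) :
    (μ {c}).toReal < 1 - α := by
  obtain ⟨w, hwim, hw⟩ := hc
  set f : ℝ → ℂ := fun x => (w + c - x)⁻¹ with hf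
  have him : ∀ x : ℝ, (w + (c : ℂ) - (x : ℂ)).im = w.im := by
    intro x; simp
  have hden : ∀ x : ℝ, w + (c : ℂ) - (x : ℂ) ≠ 0 := by
    intro x h
    apply hwim
    rw [← him x, h, Complex.zero_im]
  have hcont : Continuous f := by
    apply Continuous.inv₀ _ hden
    exact (continuous_const.sub Complex.continuous_ofReal)
  have hbound : ∀ x : ℝ, ‖f x‖ ≤ |w.im|⁻¹ := by
    intro x
    rw [hf]
    simp only [norm_inv]
    apply inv_anti₀ (abs_pos.mpr hwim)
    calc |w.im| = |(w + (c : ℂ) - (x : ℂ)).im| := by rw [him x]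
      _ ≤ ‖w + (c : ℂ) - (x : ℂ)‖ := Complex.abs_im_le_norm _
  have hint : Integrable f μ :=
    (integrable_const (|w.im|⁻¹)).mono' hcont.aestronglyMeasurable
      (Filter.Eventually.of_forall hbound)
  set a : ℝ := (μ {c}).toReal with ha
  set I : ℂ := ∫ x in ({c} : Set ℝ)ᶜ, f x ∂μ with hI
  have hsplit : cauchyT μ (w + c) = (a : ℂ) * w⁻¹ + I := by
    rw [cauchyT, ← integral_add_compl (measurableSet_singleton c) hint]
    congr 1
    rw [Measure.restrict_singleton, integral_smul_measure, integral_dirac]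
    simp [f, Complex.real_smul]
    exact Or.inl rfl
  have hw0 : w ≠ 0 := fun h => hwim (by simp [h])
  have h2 : (a : ℂ) + w * I = ((1 - α : ℝ) : ℂ) := by
    rw [← hw, hsplit]
    field_simp
  have hwI : w * I = ((1 - α - a : ℝ) : ℂ) := by
    push_cast
    push_cast at h2
    linear_combination h2
  -- μ {c}ᶜ ≠ 0
  have hcc : μ ({c} : Set ℝ)ᶜ ≠ 0 := by
    intro h0
    apply hnotpoint c
    have h1 : μ {c} = 1 := by
      have := measure_add_measure_compl (μ := μ) (measurableSet_singleton c)
      rw [h0, add_zero] at this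
      simpa using this
    ext s hs
    rw [Measure.dirac_apply' _ hs]
    by_cases hcs : c ∈ s
    · have hle : μ s ≤ 1 := prob_le_one
      have hge : (1 : ENNReal) ≤ μ s := h1 ▸ measure_mono (Set.singleton_subset_iff.mpr hcs)
      rw [le_antisymm hle hge]
      simp [Set.indicator_of_mem hcs]
    · have hsub : s ⊆ ({c} : Set ℝ)ᶜ := fun x hx => by
        simp only [Set.mem_compl_iff, Set.mem_singleton_iff]
        rintro rfl; exact hcs hx
      rw [measure_mono_null hsub h0]
      simp [Set.indicator_of_notMem hcs]
  set K : ℝ := ∫ x in ({c} : Set ℝ)ᶜ, (Complex.normSq (w + c - x))⁻¹ ∂μ with hK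
  have hgcont : Continuous fun x : ℝ => (Complex.normSq (w + c - x))⁻¹ := by
    apply Continuous.inv₀
    · exact Complex.continuous_normSq.comp (continuous_const.sub Complex.continuous_ofReal)
    · intro x
      exact (Complex.normSq_pos.mpr (hden x)).ne'
  have hgint : Integrable (fun x : ℝ => (Complex.normSq (w + c - x))⁻¹)
      (μ.restrict ({c} : Set ℝ)ᶜ) := by
    apply (integrable_const ((w.im ^ 2)⁻¹)).mono' hgcont.aestronglyMeasurable
    apply Filter.Eventually.of_forall
    intro x
    rw [Real.norm_eq_abs, _root_.abs_of_nonneg (inv_nonneg.mpr (Complex.normSq_nonneg _))]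
    have him2 : (0:ℝ) < w.im ^ 2 := by
      rcases (sq_nonneg w.im).lt_or_eq with h | h
      · exact h
      · exact absurd (pow_eq_zero_iff two_ne_zero |>.mp h.symm) hwim
    apply inv_anti₀ him2
    calc w.im ^ 2 = (w + (c : ℂ) - (x : ℂ)).im ^ 2 := by rw [him x]
      _ ≤ (w + (c : ℂ) - (x : ℂ)).re ^ 2 + (w + (c : ℂ) - (x : ℂ)).im ^ 2 := by
          nlinarith [sq_nonneg (w + (c : ℂ) - (x : ℂ)).re]
      _ = Complex.normSq (w + (c : ℂ) - (x : ℂ)) := by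
          rw [Complex.normSq_apply]; ring
  have hKpos : 0 < K := by
    rw [hK, integral_pos_iff_support_of_nonneg
      (fun x => inv_nonneg.mpr (Complex.normSq_nonneg _)) hgint]
    have hsupp : (Function.support fun x : ℝ => (Complex.normSq (w + c - x))⁻¹) = Set.univ := by
      ext x
      simp only [Function.mem_support, Set.mem_univ, iff_true]
      exact inv_ne_zero (Complex.normSq_pos.mpr (hden x)).ne'
    rw [hsupp]
    simpa [Measure.restrict_apply_univ] using hcc.bot_lt
  have hImI : I.im = -w.im * K := by
    have h3 : ∫ x in ({c} : Set ℝ)ᶜ, (f x).im ∂μ = I.im := integral_im hint.restrict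
    rw [← h3]
    have h4 : ∀ x : ℝ, (f x).im = -w.im * (Complex.normSq (w + c - x))⁻¹ := by
      intro x
      rw [hf]
      simp only [Complex.inv_im, him x]
      rw [div_eq_mul_inv, neg_mul]
    simp only [h4]
    rw [integral_const_mul]
  -- take imaginary part of conj w * (w * I) = conj w * r
  have hkey := congrArg (fun z => ((starRingEnd ℂ) w * z).im) hwI
  rw [← mul_assoc, mul_comm ((starRingEnd ℂ) w) w, Complex.mul_conj] at hkey
  have hlhs : (((Complex.normSq w : ℝ) : ℂ) * I).im = Complex.normSq w * I.im := by
    simp [Complex.mul_im]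
  have hrhs : ((starRingEnd ℂ) w * ((1 - α - a : ℝ) : ℂ)).im = -w.im * (1 - α - a) := by
    simp [Complex.mul_im]
  rw [hlhs, hrhs, hImI] at hkey
  have hr : Complex.normSq w * K = 1 - α - a := by
    have h5 : -w.im * (Complex.normSq w * K) = -w.im * (1 - α - a) := by
      linear_combination hkey
    exact mul_left_cancel₀ (neg_ne_zero.mpr hwim) h5
  have hnsq : 0 < Complex.normSq w := Complex.normSq_pos.mpr hw0
  nlinarith [mul_pos hnsq hKpos]
end

section
/- Let α ∈ (0,1) and let μ := (1/3)·(δ₋₁ + δ₀ + δ₁). Define g_α := 3α² + 6(2/3 − α)α − (2/3 − α)² and c_α^± := (3/8)·( g_α ± √( g_α² + (64/3)(2/3 − α)³·α ) ). Then: (i) if α ∈ (2/3, 1) then 0 < c_α⁻ < c_α⁺ < 1; if α = 2/3 then c_α⁻ = 0 and c_α⁺ = 1; if α ∈ (0, 2/3) then c_α⁻ < 0 < c_α⁺ < 1; (ii) if α ∈ [2/3, 1) then A_α = (−√(c_α⁺), −√(c_α⁻)) ∪ (√(c_α⁻), √(c_α⁺)), and if α ∈ (0, 2/3) then A_α = (−√(c_α⁺),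 √(c_α⁺)); (iii) c ∈ A_α if and only if there exists w ∈ ℂ ∖ ℝ with α(w+c)³ − c(w+c)² + (2/3 − α)(w+c) + c/3 = 0. -/
open MeasureTheory Complex
open scoped ENNReal

private lemma integrable_dirac'' {f : ℝ → ℂ} (a : ℝ) :
    MeasureTheory.Integrable f (Measure.dirac a) := by
  have h : f =ᵐ[Measure.dirac a] fun _ => f a := by
    rw [MeasureTheory.ae_dirac_eq]; exact Filter.eventually_pure.2 rfl
  exact (integrable_const (f a)).congr h.symm

private lemma cauchyT_eval (w : ℂ) :
    cauchyT ((1/3 : ℝ≥0∞) • (Measure.dirac (-1 : ℝ) + Measure.dirac (0 : ℝ)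
      + Measure.dirac (1 : ℝ))) w
    = (1/3 : ℝ) • ((w + 1)⁻¹ + w⁻¹ + (w - 1)⁻¹) := by
  rw [cauchyT, integral_smul_measure]
  rw [integral_add_measure ((integrable_dirac'' (-1)).add_measure (integrable_dirac'' 0))
    (integrable_dirac'' 1)]
  rw [integral_add_measure (integrable_dirac'' (-1)) (integrable_dirac'' 0)]
  rw [integral_dirac, integral_dirac, integral_dirac]
  have h3 : ((1:ℝ≥0∞)/3).toReal = (1/3 : ℝ) := by
    rw [ENNReal.toReal_div]; norm_num
  rw [h3]
  push_cast
  ring_nf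

private lemma cubic_root_exists (a b c d : ℂ) (ha : a ≠ 0) :
    ∃ z : ℂ, a*z^3 + b*z^2 + c*z + d = 0 := by
  obtain ⟨z, hz⟩ := Complex.exists_root
    (f := Polynomial.C a * Polynomial.X^3 + Polynomial.C b * Polynomial.X^2
      + Polynomial.C c * Polynomial.X + Polynomial.C d)
    (by rw [Polynomial.degree_cubic ha]; norm_num)
  exact ⟨z, by simpa [Polynomial.IsRoot] using hz⟩

private lemma cubic_nonreal_root_iff (a b c d : ℝ) (ha : a ≠ 0) :
    (∃ z : ℂ, z.im ≠ 0 ∧ (a:ℂ)*z^3 + (b:ℂ)*z^2 + (c:ℂ)*z + (d:ℂ) = 0) ↔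
    18*a*b*c*d - 4*b^3*d + b^2*c^2 - 4*a*c^3 - 27*a^2*d^2 < 0 := by
  constructor
  · rintro ⟨z, hv, hz⟩
    have e1 : a*(z.re^3-3*z.re*z.im^2) + b*(z.re^2-z.im^2) + c*z.re + d = 0 := by
      have h := congrArg Complex.re hz
      simp [pow_succ, Complex.mul_re, Complex.mul_im] at h
      ring_nf at h ⊢; linarith
    have e2' : (3*a*z.re^2 - a*z.im^2 + 2*b*z.re + c) * z.im = 0 := by
      have h := congrArg Complex.im hz
      simp [pow_succ, Complex.mul_re, Complex.mul_im] at h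
      ring_nf at h ⊢; linarith
    set u := z.re
    set v := z.im
    have e2 : 3*a*u^2 - a*v^2 + 2*b*u + c = 0 := (mul_eq_zero.1 e2').resolve_right hv
    have hc : c = a*v^2 - 3*a*u^2 - 2*b*u := by linear_combination e2
    have hd : d = 2*a*u^3 + 2*a*u*v^2 + b*u^2 + b*v^2 := by linear_combination e1 - u*e2
    have key : 18*a*b*c*d - 4*b^3*d + b^2*c^2 - 4*a*c^3 - 27*a^2*d^2
        = -4*v^2*((3*a*u+b)^2+(a*v)^2)^2 := by rw [hc, hd]; ring
    rw [key]
    have h1 : (0:ℝ) < v^2 := by positivity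
    have h2 : (0:ℝ) < (3*a*u+b)^2+(a*v)^2 := by
      have : a*v ≠ 0 := mul_ne_zero ha hv
      positivity
    nlinarith [mul_pos h1 (pow_pos h2 2)]
  · intro hdisc
    obtain ⟨z, hz⟩ := cubic_root_exists (a:ℂ) b c d (by exact_mod_cast ha)
    by_cases hv : z.im ≠ 0
    · exact ⟨z, hv, hz⟩
    push_neg at hv
    set r := z.re with hr
    have hzr : z = (r:ℂ) := Complex.ext rfl (by simp [hv])
    rw [hzr] at hz
    have hroot : a*r^3 + b*r^2 + c*r + d = 0 := by exact_mod_cast hz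
    have hd : d = -(a*r^3 + b*r^2 + c*r) := by linarith
    set b' := b + a*r with hb'
    set c' := c + b*r + a*r^2 with hc'
    have key : 18*a*b*c*d - 4*b^3*d + b^2*c^2 - 4*a*c^3 - 27*a^2*d^2
        = (3*a*r^2+2*b*r+c)^2 * (b'^2 - 4*a*c') := by rw [hb', hc', hd]; ring
    have hδ : b'^2 - 4*a*c' < 0 := by
      rw [key] at hdisc
      nlinarith [sq_nonneg (3*a*r^2+2*b*r+c)]
    set s := Real.sqrt (4*a*c' - b'^2) with hs
    have hs2 : s^2 = 4*a*c' - b'^2 := Real.sq_sqrt (by linarith)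
    have hspos : 0 < s := Real.sqrt_pos.2 (by linarith)
    have ha2 : (2:ℝ)*a ≠ 0 := by simp [ha]
    refine ⟨(↑(-b'/(2*a)) : ℂ) + (↑(s/(2*a)) : ℂ) * Complex.I, ?_, ?_⟩
    · have him : ((↑(-b'/(2*a)) : ℂ) + (↑(s/(2*a)) : ℂ) * Complex.I).im = s/(2*a) := by
        simp only [Complex.add_im, Complex.mul_im, Complex.ofReal_re, Complex.ofReal_im,
          Complex.I_re, Complex.I_im]
        ring
      rw [him]
      exact div_ne_zero (ne_of_gt hspos) ha2
    · set w : ℂ := (↑(-b'/(2*a)) : ℂ) + (↑(s/(2*a)) : ℂ) * Complex.I with hw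
      have ha' : (a:ℂ) ≠ 0 := by exact_mod_cast ha
      have hs2c : (s:ℂ)^2 = 4*(a:ℂ)*(c':ℂ) - (b':ℂ)^2 := by exact_mod_cast hs2
      have hquad : (a:ℂ)*w^2 + (b':ℂ)*w + (c':ℂ) = 0 := by
        rw [hw]; push_cast
        field_simp
        linear_combination (-1 : ℂ) * hs2c + ((s:ℂ)^2) * Complex.I_sq
      have hfact : (a:ℂ)*w^3 + (b:ℂ)*w^2 + (c:ℂ)*w + (d:ℂ)
          = (w - (r:ℂ)) * ((a:ℂ)*w^2 + (b':ℂ)*w + (c':ℂ)) := by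
        rw [hb', hc', hd]; push_cast; ring
      rw [hfact, hquad, mul_zero]

private lemma bridge (α c : ℝ) (w : ℂ) (hw : w.im ≠ 0) :
    (w * ((1/3 : ℝ) • (((w + c) + 1)⁻¹ + (w + c)⁻¹ + ((w + c) - 1)⁻¹)) = ((1 - α : ℝ) : ℂ))
    ↔ ((α : ℂ) * (w + c) ^ 3 - (c : ℂ) * (w + c) ^ 2
        + ((2/3 - α : ℝ) : ℂ) * (w + c) + (c : ℂ) / 3 = 0) := by
  set z : ℂ := w + (c : ℂ) with hz
  have hzim : z.im ≠ 0 := by rw [hz]; simpa using hw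
  have hz0 : z ≠ 0 := fun h => hzim (by rw [h]; simp)
  have hz1 : z + 1 ≠ 0 := fun h => hzim (by
    have : z = -1 := by linear_combination h
    rw [this]; simp)
  have hz2 : z - 1 ≠ 0 := fun h => hzim (by
    have : z = 1 := by linear_combination h
    rw [this]; simp)
  have hwz : w = z - (c : ℂ) := by rw [hz]; ring
  have key : w * ((1/3 : ℝ) • ((z + 1)⁻¹ + z⁻¹ + (z - 1)⁻¹)) - ((1 - α : ℝ) : ℂ)
      = ((α : ℂ) * z ^ 3 - (c : ℂ) * z ^ 2 + ((2/3 - α : ℝ) : ℂ) * z + (c : ℂ) / 3)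
        / (z * (z + 1) * (z - 1)) := by
    rw [hwz, Complex.real_smul]
    push_cast
    field_simp
    ring
  constructor
  · intro h
    have h0 : w * ((1/3 : ℝ) • ((z + 1)⁻¹ + z⁻¹ + (z - 1)⁻¹)) - ((1 - α : ℝ) : ℂ) = 0 :=
      sub_eq_zero.2 h
    rw [key] at h0
    exact (div_eq_zero_iff.1 h0).resolve_right (mul_ne_zero (mul_ne_zero hz0 hz1) hz2)
  · intro h
    have h0 : ((α : ℂ) * z ^ 3 - (c : ℂ) * z ^ 2 + ((2/3 - α : ℝ) : ℂ) * z + (c : ℂ) / 3)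
        / (z * (z + 1) * (z - 1)) = 0 := by rw [h]; simp
    rw [← key] at h0
    exact sub_eq_zero.1 h0

private lemma interval_union_eq (cm cp : ℝ) (hcm0 : 0 ≤ cm) (hcmcp : cm ≤ cp) :
    {x : ℝ | cm < x^2 ∧ x^2 < cp}
      = Set.Ioo (-Real.sqrt cp) (-Real.sqrt cm) ∪ Set.Ioo (Real.sqrt cm) (Real.sqrt cp) := by
  have hcp0 : 0 ≤ cp := le_trans hcm0 hcmcp
  have hsm2 : (Real.sqrt cm)^2 = cm := Real.sq_sqrt hcm0
  have hsp2 : (Real.sqrt cp)^2 = cp := Real.sq_sqrt hcp0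
  have hsmnn : 0 ≤ Real.sqrt cm := Real.sqrt_nonneg cm
  have hspnn : 0 ≤ Real.sqrt cp := Real.sqrt_nonneg cp
  ext x
  simp only [Set.mem_setOf_eq, Set.mem_union, Set.mem_Ioo]
  constructor
  · rintro ⟨h1', h2'⟩
    have hxp : -Real.sqrt cp < x ∧ x < Real.sqrt cp :=
      abs_lt_of_sq_lt_sq' (by rw [hsp2]; exact h2') hspnn
    have habs : Real.sqrt cm < |x| := by
      have := abs_lt_of_sq_lt_sq (by rw [hsm2, _root_.sq_abs]; exact h1') (abs_nonneg x)
      rwa [_root_.abs_of_nonneg hsmnn] at this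
    rcases lt_abs.1 habs with hcase | hcase
    · exact Or.inr ⟨hcase, hxp.2⟩
    · exact Or.inl ⟨hxp.1, by linarith⟩
  · rintro (⟨h1', h2'⟩ | ⟨h1', h2'⟩)
    · constructor
      · nlinarith [mul_pos (show (0:ℝ) < -Real.sqrt cm - x by linarith)
          (show (0:ℝ) < Real.sqrt cm - x by linarith), hsm2]
      · nlinarith [mul_pos (show (0:ℝ) < x + Real.sqrt cp by linarith)
          (show (0:ℝ) < Real.sqrt cp - x by linarith), hsp2]
    · constructor
      · nlinarith [mul_pos (show (0:ℝ) < x - Real.sqrt cm by linarith)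
          (show (0:ℝ) < x + Real.sqrt cm by linarith), hsm2]
      · nlinarith [mul_pos (show (0:ℝ) < Real.sqrt cp - x by linarith)
          (show (0:ℝ) < Real.sqrt cp + x by linarith), hsp2]

private lemma interval_eq (cm cp : ℝ) (hcmneg : cm < 0) (hcp0 : 0 ≤ cp) :
    {x : ℝ | cm < x^2 ∧ x^2 < cp} = Set.Ioo (-Real.sqrt cp) (Real.sqrt cp) := by
  have hsp2 : (Real.sqrt cp)^2 = cp := Real.sq_sqrt hcp0
  have hspnn : 0 ≤ Real.sqrt cp := Real.sqrt_nonneg cp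
  ext x
  simp only [Set.mem_setOf_eq, Set.mem_Ioo]
  constructor
  · rintro ⟨_, h2'⟩
    exact abs_lt_of_sq_lt_sq' (by rw [hsp2]; exact h2') hspnn
  · rintro ⟨h1', h2'⟩
    refine ⟨by nlinarith [sq_nonneg x], ?_⟩
    nlinarith [mul_pos (show (0:ℝ) < Real.sqrt cp - x by linarith)
      (show (0:ℝ) < Real.sqrt cp + x by linarith), hsp2]

set_option maxHeartbeats 1000000 in
theorem stmt9 (α : ℝ) (hα : α ∈ Set.Ioo (0 : ℝ) 1) :
    let μ : Measure ℝ :=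
      (1/3 : ℝ≥0∞) • (Measure.dirac (-1 : ℝ) + Measure.dirac (0 : ℝ) + Measure.dirac (1 : ℝ))
    let g : ℝ := 3 * α ^ 2 + 6 * (2/3 - α) * α - (2/3 - α) ^ 2
    let cm : ℝ := (3/8) * (g - Real.sqrt (g ^ 2 + (64/3) * (2/3 - α) ^ 3 * α))
    let cp : ℝ := (3/8) * (g + Real.sqrt (g ^ 2 + (64/3) * (2/3 - α) ^ 3 * α))
    let A : Set ℝ :=
      {c : ℝ | ∃ w : ℂ, w.im ≠ 0 ∧ w * cauchyT μ (w + c) = ((1 - α : ℝ) : ℂ)}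
    -- (i)
    ((α ∈ Set.Ioo (2/3 : ℝ) 1 → 0 < cm ∧ cm < cp ∧ cp < 1) ∧
      (α = 2/3 → cm = 0 ∧ cp = 1) ∧
      (α ∈ Set.Ioo (0 : ℝ) (2/3) → cm < 0 ∧ 0 < cp ∧ cp < 1)) ∧
    -- (ii)
    ((α ∈ Set.Ico (2/3 : ℝ) 1 →
        A = Set.Ioo (-Real.sqrt cp) (-Real.sqrt cm) ∪ Set.Ioo (Real.sqrt cm) (Real.sqrt cp)) ∧
      (α ∈ Set.Ioo (0 : ℝ) (2/3) → A = Set.Ioo (-Real.sqrt cp) (Real.sqrt cp))) ∧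
    -- (iii)
    (∀ c : ℝ, c ∈ A ↔ ∃ w : ℂ, w.im ≠ 0 ∧
        (α : ℂ) * (w + c) ^ 3 - (c : ℂ) * (w + c) ^ 2
          + ((2/3 - α : ℝ) : ℂ) * (w + c) + (c : ℂ) / 3 = 0) := by
  intro μ g cm cp A
  obtain ⟨hα0, hα1⟩ := hα
  have hμ : μ = (1/3 : ℝ≥0∞) • (Measure.dirac (-1 : ℝ) + Measure.dirac (0 : ℝ)
      + Measure.dirac (1 : ℝ)) := rfl
  have hg : g = 3 * α ^ 2 + 6 * (2/3 - α) * α - (2/3 - α) ^ 2 := rfl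
  have hcm : cm = (3/8) * (g - Real.sqrt (g ^ 2 + (64/3) * (2/3 - α) ^ 3 * α)) := rfl
  have hcp : cp = (3/8) * (g + Real.sqrt (g ^ 2 + (64/3) * (2/3 - α) ^ 3 * α)) := rfl
  have hAmem : ∀ x : ℝ, x ∈ A ↔ ∃ w : ℂ, w.im ≠ 0 ∧
      w * cauchyT μ (w + x) = ((1 - α : ℝ) : ℂ) := fun _ => Iff.rfl
  clear_value μ g cm cp A
  have hD' : g ^ 2 + (64/3) * (2/3 - α) ^ 3 * α = (16/3)*(1-α)*(α+1/3)^3 := by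
    rw [hg]; ring
  have hDpos : 0 < g ^ 2 + (64/3) * (2/3 - α) ^ 3 * α := by
    rw [hD']
    nlinarith [mul_pos (show (0:ℝ) < 1 - α by linarith)
      (pow_pos (show (0:ℝ) < α + 1/3 by linarith) 3)]
  set S := Real.sqrt (g ^ 2 + (64/3) * (2/3 - α) ^ 3 * α) with hSdef
  have hS2 : S ^ 2 = g ^ 2 + (64/3) * (2/3 - α) ^ 3 * α := Real.sq_sqrt (le_of_lt hDpos)
  have hSpos : 0 < S := Real.sqrt_pos.2 hDpos
  have hSnn : 0 ≤ S := le_of_lt hSpos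
  clear_value S
  have hgval : g = 4/3 - 4*(2/3 - α)^2 := by rw [hg]; ring
  have hgle : g ≤ 4/3 := by rw [hgval]; nlinarith [sq_nonneg (2/3 - α)]
  have hcmcp : cm ≤ cp := by rw [hcm, hcp]; linarith
  -- generic: cp < 1 whenever α ≠ 2/3
  have hcp_lt_one : (2/3 - α) ≠ 0 → cp < 1 := by
    intro hne
    have hb2 : 0 < (2/3 - α)^2 := (sq_nonneg _).lt_of_ne ((pow_ne_zero 2 hne).symm)
    have h83 : 0 < 8/3 - g := by linarith
    have h1 : 0 < 1 - (2/3 - α)*α := by nlinarith [sq_nonneg (α - 1/3)]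
    have hcond : g ^ 2 + (64/3) * (2/3 - α) ^ 3 * α < (8/3 - g)^2 := by
      have key : (64/3) * (2/3 - α) ^ 3 * α + (16/3)*g < 64/9 := by
        rw [hgval]; nlinarith [mul_pos hb2 h1]
      nlinarith [key]
    have hSlt : S < 8/3 - g := by rw [hSdef]; exact (Real.sqrt_lt' h83).2 hcond
    rw [hcp]; linarith
  -- (i) part 1
  have i1 : α ∈ Set.Ioo (2/3 : ℝ) 1 → 0 < cm ∧ cm < cp ∧ cp < 1 := by
    rintro ⟨hb, _⟩
    have hβ : 2/3 - α < 0 := by linarith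
    have hb2 : 0 < (2/3 - α)^2 :=
      (sq_nonneg _).lt_of_ne ((pow_ne_zero 2 (show (2/3 - α) ≠ 0 by linarith)).symm)
    have hgpos : 0 < g := by
      rw [hgval]
      nlinarith [mul_pos (show (0:ℝ) < 1 - α by linarith)
        (show (0:ℝ) < α - 1/3 by linarith)]
    have hb3 : (2/3 - α)^3 * α < 0 := by nlinarith [mul_pos hb2 hα0]
    have hSg : S < g := by rw [hSdef]; exact (Real.sqrt_lt' hgpos).2 (by linarith)
    refine ⟨?_, ?_, hcp_lt_one (by linarith)⟩
    · rw [hcm]; linarith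
    · rw [hcm, hcp]; linarith
  -- (i) part 2
  have i2 : α = 2/3 → cm = 0 ∧ cp = 1 := by
    intro h23
    have hgv : g = 4/3 := by rw [hgval, h23]; norm_num
    have hprod : (S - 4/3) * (S + 4/3) = 0 := by
      have hz : (64/3) * (2/3 - α) ^ 3 * α = 0 := by rw [h23]; norm_num
      linear_combination hS2 + (g + 4/3)*hgv + hz
    have hSv : S = 4/3 := by
      rcases mul_eq_zero.1 hprod with h | h
      · linarith
      · linarith
    constructor
    · rw [hcm, hgv, hSv]; norm_num
    · rw [hcp, hgv, hSv]; norm_num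
  -- (i) part 3
  have i3 : α ∈ Set.Ioo (0 : ℝ) (2/3) → cm < 0 ∧ 0 < cp ∧ cp < 1 := by
    rintro ⟨_, hb⟩
    have hβ : 0 < 2/3 - α := by linarith
    have hb3 : 0 < (2/3 - α)^3 * α := mul_pos (pow_pos hβ 3) hα0
    have hgS : g < S := by
      rcases le_or_gt g 0 with hgle0 | hgpos'
      · linarith
      · rw [hSdef]; exact (Real.lt_sqrt hgpos'.le).2 (by linarith)
    have hgS' : -g < S := by
      rcases le_or_gt g 0 with hgle0 | hgpos'
      · rw [hSdef]; exact (Real.lt_sqrt (by linarith)).2 (by nlinarith [hb3])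
      · linarith
    refine ⟨?_, ?_, hcp_lt_one (by linarith)⟩
    · rw [hcm]; linarith
    · rw [hcp]; linarith
  -- (iii)
  have hiii : ∀ c : ℝ, c ∈ A ↔ ∃ w : ℂ, w.im ≠ 0 ∧
      (α : ℂ) * (w + c) ^ 3 - (c : ℂ) * (w + c) ^ 2
        + ((2/3 - α : ℝ) : ℂ) * (w + c) + (c : ℂ) / 3 = 0 := by
    intro c
    rw [hAmem c]
    constructor
    · rintro ⟨w, hw, he⟩
      rw [hμ, cauchyT_eval] at he
      exact ⟨w, hw, (bridge α c w hw).1 he⟩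
    · rintro ⟨w, hw, he⟩
      refine ⟨w, hw, ?_⟩
      rw [hμ, cauchyT_eval]
      exact (bridge α c w hw).2 he
  -- membership characterization
  have hmem : ∀ x : ℝ, x ∈ A ↔ (cm < x^2 ∧ x^2 < cp) := by
    intro x
    rw [hiii x]
    have h1 : (∃ w : ℂ, w.im ≠ 0 ∧
        (α : ℂ) * (w + x) ^ 3 - (x : ℂ) * (w + x) ^ 2
          + ((2/3 - α : ℝ) : ℂ) * (w + x) + (x : ℂ) / 3 = 0) ↔
        (∃ z : ℂ, z.im ≠ 0 ∧ (α:ℂ)*z^3 + ((-x : ℝ):ℂ)*z^2 + ((2/3 - α : ℝ):ℂ)*z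
          + ((x/3 : ℝ):ℂ) = 0) := by
      constructor
      · rintro ⟨w, hw, he⟩
        refine ⟨w + x, by simpa using hw, ?_⟩
        push_cast at he ⊢
        linear_combination he
      · rintro ⟨z, hz, he⟩
        refine ⟨z - x, by simpa using hz, ?_⟩
        push_cast
        push_cast at he
        linear_combination he
    rw [h1, cubic_nonreal_root_iff α (-x) (2/3 - α) (x/3) (ne_of_gt hα0)]
    have hq : 18*α*(-x)*(2/3-α)*(x/3) - 4*(-x)^3*(x/3) + (-x)^2*(2/3-α)^2
        - 4*α*(2/3-α)^3 - 27*α^2*(x/3)^2 = (4/3)*(x^2 - cm)*(x^2 - cp) := by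
      rw [hcm, hcp]
      linear_combination (3/16)*hS2 + (x^2)*hg
    rw [hq]
    constructor
    · intro h
      constructor
      · by_contra hle; push_neg at hle
        nlinarith [mul_nonneg (sub_nonneg.2 hle) (sub_nonneg.2 (hle.trans hcmcp))]
      · by_contra hle; push_neg at hle
        nlinarith [mul_nonneg (sub_nonneg.2 (hcmcp.trans hle)) (sub_nonneg.2 hle)]
    · rintro ⟨h1', h2'⟩
      nlinarith [mul_pos (sub_pos.2 h1') (sub_pos.2 h2')]
  -- (ii) part 1
  have ii1 : α ∈ Set.Ico (2/3 : ℝ) 1 →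
      A = Set.Ioo (-Real.sqrt cp) (-Real.sqrt cm) ∪ Set.Ioo (Real.sqrt cm) (Real.sqrt cp) := by
    rintro ⟨hb, _⟩
    have hβ : 2/3 - α ≤ 0 := by linarith
    have hb3 : (2/3 - α)^3 * α ≤ 0 := by nlinarith [sq_nonneg (2/3 - α)]
    have hgpos : 0 < g := by
      rw [hgval]
      nlinarith [mul_nonneg (show (0:ℝ) ≤ 1 - α by linarith)
        (show (0:ℝ) ≤ α - 1/3 by linarith)]
    have hSg : S ≤ g := by
      have h1 : S ≤ Real.sqrt (g^2) := by rw [hSdef]; exact Real.sqrt_le_sqrt (by linarith)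
      rwa [Real.sqrt_sq hgpos.le] at h1
    have hcm0 : 0 ≤ cm := by rw [hcm]; linarith
    rw [← interval_union_eq cm cp hcm0 hcmcp]
    ext x
    rw [hmem x]
    simp only [Set.mem_setOf_eq]
  -- (ii) part 2
  have ii2 : α ∈ Set.Ioo (0 : ℝ) (2/3) → A = Set.Ioo (-Real.sqrt cp) (Real.sqrt cp) := by
    intro h
    obtain ⟨hcmneg, hcppos, _⟩ := i3 h
    rw [← interval_eq cm cp hcmneg (le_of_lt hcppos)]
    ext x
    rw [hmem x]
    simp only [Set.mem_setOf_eq]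
  exact ⟨⟨i1, i2, i3⟩, ⟨ii1, ii2⟩, hiii⟩
end

section
/- Let μ be a Borel probability measure on ℝ with compact support which is not a point mass, let α ∈ (0,1) and c ∈ ℝ, and suppose there exists w ∈ ℂ ∖ ℝ with w·G_μ(w + c) = 1 − α; let w₀ be the unique such element with Im(w₀) > 0. Define f : (0, π) → ℝ by f(s) := ∫_ℝ log | |w₀|·e^{is} + c − x | dμ(x) − (1 − α)·log|w₀|. Then f is twice differentiable on (0, π), f′(Arg(w₀)) = 0, and f″(s) < 0 for every s ∈ (0, π) with f′(s) = 0; consequently Arg(w₀) is the unique critical point of f in (0, π) and is the strict global maximum of f on (0, π). -/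
open MeasureTheory Complex

noncomputable def sden (r c s x : ℝ) : ℝ := (r * Real.cos s + (c - x))^2 + (r * Real.sin s)^2

lemma sden_pos {r c s x : ℝ} (hr : 0 < r) (hs : 0 < Real.sin s) : 0 < sden r c s x := by
  have : 0 < (r * Real.sin s)^2 := by positivity
  have h2 : 0 ≤ (r * Real.cos s + (c - x))^2 := sq_nonneg _
  unfold sden; linarith

lemma sden_hasDerivAt (r c x : ℝ) (s : ℝ) :
    HasDerivAt (fun s => sden r c s x) (-2 * r * Real.sin s * (c - x)) s := by
  have h1 : HasDerivAt (fun s => r * Real.cos s + (c - x)) (r * (-Real.sin s)) s :=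
    ((Real.hasDerivAt_cos s).const_mul r).add_const _
  have h2 : HasDerivAt (fun s => r * Real.sin s) (r * Real.cos s) s :=
    (Real.hasDerivAt_sin s).const_mul r
  have := (h1.pow 2).add (h2.pow 2)
  refine this.congr_deriv ?_
  ring

lemma log_sden_hasDerivAt {r c x s : ℝ} (hr : 0 < r) (hs : 0 < Real.sin s) :
    HasDerivAt (fun s => (1/2) * Real.log (sden r c s x))
      (-(r * Real.sin s) * ((c - x) / sden r c s x)) s := by
  have hne : sden r c s x ≠ 0 := (sden_pos hr hs).ne'
  have := ((Real.hasDerivAt_log hne).comp s (sden_hasDerivAt r c x s)).const_mul (1/2 : ℝ)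
  refine this.congr_deriv ?_
  field_simp

lemma quot_hasDerivAt {r c x s : ℝ} (hr : 0 < r) (hs : 0 < Real.sin s) :
    HasDerivAt (fun s => (c - x) / sden r c s x)
      (2 * r * Real.sin s * ((c - x)^2 / (sden r c s x)^2)) s := by
  have hne : sden r c s x ≠ 0 := (sden_pos hr hs).ne'
  have := (hasDerivAt_const s (c - x)).div (sden_hasDerivAt r c x s) hne
  refine this.congr_deriv ?_
  field_simp
  ring

lemma integrand_eq (r c s x : ℝ) :
    Real.log (‖(r:ℂ) * Complex.exp ((s:ℂ) * Complex.I) + (c:ℂ) - (x:ℂ)‖) =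
      (1/2) * Real.log (sden r c s x) := by
  have hz : ((r:ℂ) * Complex.exp ((s:ℂ) * Complex.I) + (c:ℂ) - (x:ℂ)).re
      = r * Real.cos s + (c - x) ∧
      ((r:ℂ) * Complex.exp ((s:ℂ) * Complex.I) + (c:ℂ) - (x:ℂ)).im = r * Real.sin s := by
    constructor <;>
      simp [Complex.add_re, Complex.sub_re, Complex.mul_re, Complex.mul_im,
        Complex.exp_ofReal_mul_I_re, Complex.exp_ofReal_mul_I_im] <;> ring
  rw [Complex.norm_def, Real.log_sqrt (Complex.normSq_nonneg _)]
  rw [Complex.normSq_apply, hz.1, hz.2]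
  unfold sden
  ring_nf


lemma sden_ge {r c s x m : ℝ} (hr : 0 < r) (hm : 0 < m) (hms : m ≤ Real.sin s) :
    (r*m)^2 ≤ sden r c s x := by
  have h1 : (r*m)^2 ≤ (r * Real.sin s)^2 := by
    apply sq_le_sq'
    · nlinarith
    · nlinarith
  have h2 : 0 ≤ (r * Real.cos s + (c - x))^2 := sq_nonneg _
  unfold sden; linarith

lemma sden_le {r c s x Mc : ℝ} (hr : 0 < r) (hx : |c - x| ≤ Mc) :
    sden r c s x ≤ (r + Mc)^2 + r^2 := by
  have hc := Real.neg_one_le_cos s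
  have hc' := Real.cos_le_one s
  have hs := Real.neg_one_le_sin s
  have hs' := Real.sin_le_one s
  have h1 : |r * Real.cos s + (c - x)| ≤ r + Mc := by
    calc |r * Real.cos s + (c - x)| ≤ |r * Real.cos s| + |c - x| := abs_add_le _ _
    _ ≤ r + Mc := by
        have : |r * Real.cos s| ≤ r := by rw [abs_mul, abs_of_pos hr]; nlinarith [abs_le.2 ⟨hc, hc'⟩]
        linarith
  have h2 : (r * Real.cos s + (c-x))^2 ≤ (r + Mc)^2 := by
    have := sq_le_sq' (neg_le_of_abs_le h1) (le_of_abs_le h1)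
    exact this
  have hsin2 : (Real.sin s)^2 ≤ 1 := by nlinarith
  have h3 : (r * Real.sin s)^2 ≤ r^2 := by
    rw [mul_pow]
    nlinarith [sq_nonneg r]
  unfold sden; linarith

lemma ball_sin {s₀ : ℝ} (h : s₀ ∈ Set.Ioo (0:ℝ) Real.pi) :
    ∃ ε > 0, ∀ s ∈ Metric.ball s₀ ε, Real.sin s₀ / 2 ≤ Real.sin s := by
  have hs : 0 < Real.sin s₀ := Real.sin_pos_of_pos_of_lt_pi h.1 h.2
  have hev : ∀ᶠ s in nhds s₀, Real.sin s₀ / 2 ≤ Real.sin s :=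
    (Real.continuous_sin.continuousAt (x := s₀)).eventually
      (eventually_ge_nhds (by linarith))
  rw [Metric.eventually_nhds_iff] at hev
  obtain ⟨ε, hε, hev⟩ := hev
  exact ⟨ε, hε, fun s hs' => hev (Metric.mem_ball.mp hs')⟩

lemma cont_sden (r c s : ℝ) : Continuous fun x => sden r c s x := by
  unfold sden; fun_prop

lemma intA {μ : Measure ℝ} [IsProbabilityMeasure μ] {r c Mc : ℝ} (hr : 0 < r)
    (hM : ∀ᵐ x ∂μ, |c - x| ≤ Mc) {s₀ : ℝ} (hs₀ : s₀ ∈ Set.Ioo (0:ℝ) Real.pi) :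
    HasDerivAt (fun s => ∫ x, (1/2) * Real.log (sden r c s x) ∂μ)
      (-(r * Real.sin s₀) * ∫ x, (c - x)/sden r c s₀ x ∂μ) s₀ := by
  obtain ⟨ε, hε, hball⟩ := ball_sin hs₀
  have hsin₀ : 0 < Real.sin s₀ := Real.sin_pos_of_pos_of_lt_pi hs₀.1 hs₀.2
  set m := Real.sin s₀ / 2 with hm_def
  have hm : 0 < m := half_pos hsin₀
  have hms₀ : m ≤ Real.sin s₀ := by rw [hm_def]; linarith
  have key := hasDerivAt_integral_of_dominated_loc_of_deriv_le (μ := μ)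
      (F := fun s x => (1/2) * Real.log (sden r c s x))
      (F' := fun s x => -(r * Real.sin s) * ((c - x) / sden r c s x))
      (bound := fun _ => r * (|Mc| / (r*m)^2)) (x₀ := s₀) (Metric.ball_mem_nhds s₀ hε)
      (Filter.Eventually.of_forall fun s =>
        ((Real.measurable_log.comp (cont_sden r c s).measurable).const_mul _).aestronglyMeasurable)
      ?_ ?_ ?_ (integrable_const _) ?_
  · have h2 := key.2
    rwa [MeasureTheory.integral_const_mul] at h2
  · -- integrability of F s₀
    apply Integrable.mono' (integrable_const
      ((1/2) * (|Real.log ((r*m)^2)| + |Real.log ((r + |Mc|)^2 + r^2)|)))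
      (((Real.measurable_log.comp (cont_sden r c s₀).measurable).const_mul _).aestronglyMeasurable)
    filter_upwards [hM] with x hx
    have hlo : (r*m)^2 ≤ sden r c s₀ x := sden_ge hr hm hms₀
    have hhi : sden r c s₀ x ≤ (r + |Mc|)^2 + r^2 := sden_le hr (hx.trans (le_abs_self Mc))
    have hlopos : (0:ℝ) < (r*m)^2 := by positivity
    have h1 : Real.log ((r*m)^2) ≤ Real.log (sden r c s₀ x) := Real.log_le_log hlopos hlo
    have h2 : Real.log (sden r c s₀ x) ≤ Real.log ((r + |Mc|)^2 + r^2) :=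
      Real.log_le_log (lt_of_lt_of_le hlopos hlo) hhi
    rw [Real.norm_eq_abs, abs_mul]
    have : |Real.log (sden r c s₀ x)| ≤ |Real.log ((r*m)^2)| + |Real.log ((r + |Mc|)^2 + r^2)| := by
      rw [abs_le]
      constructor
      · have := neg_abs_le (Real.log ((r*m)^2)); have := abs_nonneg (Real.log ((r + |Mc|)^2 + r^2)); linarith
      · have := le_abs_self (Real.log ((r + |Mc|)^2 + r^2)); have := abs_nonneg (Real.log ((r*m)^2)); linarith
    calc |(1/2 : ℝ)| * |Real.log (sden r c s₀ x)| = (1/2) * |Real.log (sden r c s₀ x)| := by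
          norm_num
      _ ≤ (1/2) * (|Real.log ((r*m)^2)| + |Real.log ((r + |Mc|)^2 + r^2)|) := by linarith
  · -- measurability of F' s₀
    exact (Continuous.aestronglyMeasurable (by
      apply Continuous.mul continuous_const
      exact Continuous.div (by fun_prop) (cont_sden r c s₀)
        (fun x => (sden_pos hr hsin₀).ne')))
  · -- bound
    filter_upwards [hM] with x hx
    intro s hs
    have hsin : m ≤ Real.sin s := hball s hs
    have hsinpos : 0 < Real.sin s := lt_of_lt_of_le hm hsin
    have hlo : (r*m)^2 ≤ sden r c s x := sden_ge hr hm hsin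
    rw [Real.norm_eq_abs, abs_mul, abs_neg, abs_mul, abs_of_pos hr, abs_of_pos hsinpos,
      abs_div, abs_of_pos (sden_pos hr hsinpos)]
    have h1 : r * Real.sin s ≤ r := by nlinarith [Real.sin_le_one s]
    have h2 : |c - x| / sden r c s x ≤ |Mc| / (r*m)^2 :=
      div_le_div₀ (abs_nonneg Mc) (hx.trans (le_abs_self Mc)) (by positivity) hlo
    have hq : 0 ≤ |c - x| / sden r c s x := div_nonneg (abs_nonneg _) (sden_pos hr hsinpos).le
    nlinarith [mul_le_mul h1 h2 hq (le_of_lt hr)]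
  · -- differentiability
    apply Filter.Eventually.of_forall
    intro x s hs
    exact log_sden_hasDerivAt hr (lt_of_lt_of_le hm (hball s hs))

lemma intB {μ : Measure ℝ} [IsProbabilityMeasure μ] {r c Mc : ℝ} (hr : 0 < r)
    (hM : ∀ᵐ x ∂μ, |c - x| ≤ Mc) {s₀ : ℝ} (hs₀ : s₀ ∈ Set.Ioo (0:ℝ) Real.pi) :
    HasDerivAt (fun s => ∫ x, (c - x)/sden r c s x ∂μ)
      (2 * r * Real.sin s₀ * ∫ x, (c - x)^2/(sden r c s₀ x)^2 ∂μ) s₀ := by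
  obtain ⟨ε, hε, hball⟩ := ball_sin hs₀
  have hsin₀ : 0 < Real.sin s₀ := Real.sin_pos_of_pos_of_lt_pi hs₀.1 hs₀.2
  set m := Real.sin s₀ / 2 with hm_def
  have hm : 0 < m := half_pos hsin₀
  have hms₀ : m ≤ Real.sin s₀ := by rw [hm_def]; linarith
  have key := hasDerivAt_integral_of_dominated_loc_of_deriv_le (μ := μ)
      (F := fun s x => (c - x)/sden r c s x)
      (F' := fun s x => 2 * r * Real.sin s * ((c - x)^2 / (sden r c s x)^2))
      (bound := fun _ => 2 * r * (Mc^2 / (r*m)^4)) (x₀ := s₀) (Metric.ball_mem_nhds s₀ hε)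
      (Filter.Eventually.of_forall fun s =>
        ((measurable_const.sub measurable_id).div
          (cont_sden r c s).measurable).aestronglyMeasurable)
      ?_ ?_ ?_ (integrable_const _) ?_
  · have h2 := key.2
    rwa [MeasureTheory.integral_const_mul] at h2
  · -- integrability of F s₀
    apply Integrable.mono' (integrable_const (|Mc| / (r*m)^2))
      (((measurable_const.sub measurable_id).div
          (cont_sden r c s₀).measurable).aestronglyMeasurable)
    filter_upwards [hM] with x hx
    have hlo : (r*m)^2 ≤ sden r c s₀ x := sden_ge hr hm hms₀
    show ‖(c - x) / sden r c s₀ x‖ ≤ _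
    rw [Real.norm_eq_abs, abs_div, abs_of_pos (sden_pos hr hsin₀)]
    exact div_le_div₀ (abs_nonneg Mc) (hx.trans (le_abs_self Mc)) (by positivity) hlo
  · -- measurability of F' s₀
    exact (Continuous.aestronglyMeasurable (by
      apply Continuous.mul continuous_const
      exact Continuous.div (by fun_prop) ((cont_sden r c s₀).pow 2)
        (fun x => pow_ne_zero 2 (sden_pos hr hsin₀).ne')))
  · -- bound
    filter_upwards [hM] with x hx
    intro s hs
    have hsin : m ≤ Real.sin s := hball s hs
    have hsinpos : 0 < Real.sin s := lt_of_lt_of_le hm hsin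
    have hlo : (r*m)^2 ≤ sden r c s x := sden_ge hr hm hsin
    have hlo2 : ((r*m)^2)^2 ≤ (sden r c s x)^2 := by
      apply pow_le_pow_left₀ (by positivity) hlo
    have hMc0 : 0 ≤ Mc := le_trans (abs_nonneg _) hx
    rw [Real.norm_eq_abs, abs_mul, abs_mul, abs_mul, abs_of_pos hr, abs_of_pos hsinpos,
      abs_div]
    have hnum : |(c-x)^2| = (c-x)^2 := abs_of_nonneg (sq_nonneg _)
    have hden : |(sden r c s x)^2| = (sden r c s x)^2 := abs_of_nonneg (sq_nonneg _)
    rw [hnum, hden]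
    have h1 : Real.sin s ≤ 1 := Real.sin_le_one s
    have h2 : (c-x)^2 / (sden r c s x)^2 ≤ Mc^2 / (r*m)^4 := by
      have : ((r*m)^2)^2 = (r*m)^4 := by ring
      rw [← this]
      apply div_le_div₀ (by positivity) (by nlinarith [abs_nonneg (c-x), _root_.sq_abs (c-x)])
        (by positivity) hlo2
    have hq : 0 ≤ (c-x)^2 / (sden r c s x)^2 := by positivity
    have h3 : |(2:ℝ)| = 2 := by norm_num
    rw [h3]
    nlinarith [mul_le_mul h1 h2 hq (by norm_num : (0:ℝ) ≤ 1), mul_pos (by norm_num : (0:ℝ) < 2) hr]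
  · -- differentiability
    apply Filter.Eventually.of_forall
    intro x s hs
    exact quot_hasDerivAt hr (lt_of_lt_of_le hm (hball s hs))

lemma eq_dirac {μ : Measure ℝ} [IsProbabilityMeasure μ] {c : ℝ} (h : μ ({c}ᶜ) = 0) :
    μ = Measure.dirac c := by
  ext s hs
  rw [Measure.dirac_apply' _ hs]
  by_cases hc : c ∈ s
  · have h1 : μ sᶜ = 0 := measure_mono_null
      (Set.compl_subset_compl.mpr (Set.singleton_subset_iff.mpr hc)) h
    have h2 := measure_compl hs (measure_ne_top μ s)
    rw [h1, measure_univ] at h2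
    have h3 : μ s = 1 := by
      have h4 : μ s ≤ 1 := prob_le_one
      have h5 := h2.symm
      rw [tsub_eq_zero_iff_le] at h5
      exact le_antisymm h4 h5
    simp [Set.indicator_of_mem hc, h3]
  · have hsub : s ⊆ {c}ᶜ := by
      intro y hy
      simp only [Set.mem_compl_iff, Set.mem_singleton_iff]
      rintro rfl
      exact hc hy
    have h1 : μ s = 0 := measure_mono_null hsub h
    rw [h1, Set.indicator_of_notMem hc]

lemma T2_pos {μ : Measure ℝ} [IsProbabilityMeasure μ] {r c Mc s : ℝ} (hr : 0 < r)
    (hM : ∀ᵐ x ∂μ, |c - x| ≤ Mc) (hnd : μ ≠ Measure.dirac c) (hs : 0 < Real.sin s) :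
    0 < ∫ x, (c - x)^2/(sden r c s x)^2 ∂μ := by
  set g := fun x => (c - x)^2/(sden r c s x)^2 with hg
  have hg0 : ∀ x, 0 ≤ g x := fun x => div_nonneg (sq_nonneg _) (sq_nonneg _)
  have hmeas : AEStronglyMeasurable g μ := Continuous.aestronglyMeasurable
    (Continuous.div (by fun_prop) ((cont_sden r c s).pow 2)
      fun x => pow_ne_zero 2 (sden_pos hr hs).ne')
  have hint : Integrable g μ := by
    apply Integrable.mono' (integrable_const (Mc^2 / ((r*Real.sin s)^2)^2)) hmeas
    filter_upwards [hM] with x hx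
    rw [Real.norm_eq_abs, _root_.abs_of_nonneg (hg0 x)]
    have hlo2 : ((r*Real.sin s)^2)^2 ≤ (sden r c s x)^2 :=
      pow_le_pow_left₀ (by positivity) (sden_ge hr hs le_rfl) 2
    have hnum : (c - x)^2 ≤ Mc^2 := by nlinarith [abs_nonneg (c-x), _root_.sq_abs (c-x)]
    exact div_le_div₀ (by nlinarith [abs_nonneg (c-x), _root_.sq_abs (c-x), sq_nonneg (c-x)])
      hnum (by positivity) hlo2
  by_contra hcon
  have hz : ∫ x, g x ∂μ = 0 := le_antisymm (not_lt.mp hcon) (integral_nonneg hg0)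
  rw [integral_eq_zero_iff_of_nonneg hg0 hint] at hz
  have hz' : ∀ᵐ x ∂μ, g x = 0 := hz
  rw [ae_iff] at hz'
  apply hnd
  apply eq_dirac
  apply measure_mono_null _ hz'
  intro x hx
  simp only [Set.mem_setOf_eq]
  have hxc : c - x ≠ 0 := sub_ne_zero.mpr (fun h' => hx (by simp [h'.symm]))
  have : 0 < g x := div_pos (by positivity) (pow_pos (sden_pos hr hs) 2)
  exact this.ne'

lemma T1_zero {μ : Measure ℝ} [IsProbabilityMeasure μ] {c : ℝ} {w₀ : ℂ} (hw₀ : 0 < w₀.im)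
    (hIm : (w₀ * ∫ x : ℝ, (w₀ + (c:ℂ) - (x:ℂ))⁻¹ ∂μ).im = 0) :
    ∫ x, (c - x)/sden ‖w₀‖ c (Complex.arg w₀) x ∂μ = 0 := by
  have hw0ne : w₀ ≠ 0 := fun h => by simp [h] at hw₀
  set r := ‖w₀‖ with hrdef
  set s₀ := Complex.arg w₀ with hsdef
  have hr : 0 < r := norm_pos_iff.mpr hw0ne
  have hre : r * Real.cos s₀ = w₀.re := by rw [hsdef, Complex.cos_arg hw0ne]; field_simp; rw [hrdef]; ring
  have him : r * Real.sin s₀ = w₀.im := by rw [hsdef, Complex.sin_arg]; field_simp; rw [hrdef]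
  have hsin : 0 < Real.sin s₀ := by
    have : 0 < r * Real.sin s₀ := him ▸ hw₀
    nlinarith
  have huim : ∀ x : ℝ, (w₀ + (c:ℂ) - (x:ℂ)).im = w₀.im := by intro x; simp
  have hune : ∀ x : ℝ, (w₀ + (c:ℂ) - (x:ℂ)) ≠ 0 := by
    intro x h
    have h2 := huim x
    rw [h, Complex.zero_im] at h2
    exact hw₀.ne' h2.symm
  have hint : Integrable (fun x : ℝ => w₀ * (w₀ + (c:ℂ) - (x:ℂ))⁻¹) μ := by
    have hcont : Continuous (fun x : ℝ => w₀ * (w₀ + (c:ℂ) - (x:ℂ))⁻¹) :=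
      continuous_const.mul (((continuous_const.sub Complex.continuous_ofReal)).inv₀ hune)
    apply Integrable.mono' (integrable_const (r * (w₀.im)⁻¹)) hcont.aestronglyMeasurable
    apply Filter.Eventually.of_forall
    intro x
    rw [norm_mul, norm_inv]
    have habs : w₀.im ≤ ‖w₀ + (c:ℂ) - (x:ℂ)‖ := by
      have := Complex.abs_im_le_norm (w₀ + (c:ℂ) - (x:ℂ))
      rw [huim x] at this
      exact (le_abs_self _).trans this
    have : (‖w₀ + (c:ℂ) - (x:ℂ)‖)⁻¹ ≤ (w₀.im)⁻¹ :=
      inv_anti₀ hw₀ habs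
    have h0 : 0 ≤ (‖w₀ + (c:ℂ) - (x:ℂ)‖)⁻¹ := by positivity
    exact mul_le_mul_of_nonneg_left this hr.le
  rw [← MeasureTheory.integral_const_mul] at hIm
  have hIm2 := integral_im (𝕜 := ℂ) hint
  simp only [RCLike.im_eq_complex_im] at hIm2
  rw [hIm] at hIm2
  replace hIm := hIm2
  have h2 : ∀ x : ℝ, (w₀ * (w₀ + (c:ℂ) - (x:ℂ))⁻¹).im = w₀.im * ((c - x)/sden r c s₀ x) := by
    intro x
    have hnsq : Complex.normSq (w₀ + (c:ℂ) - (x:ℂ)) = sden r c s₀ x := by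
      simp only [Complex.normSq_apply, Complex.sub_re, Complex.add_re, Complex.ofReal_re,
        Complex.sub_im, Complex.add_im, Complex.ofReal_im, sden]
      rw [← hre, ← him]
      ring
    rw [← div_eq_mul_inv, Complex.div_im, hnsq]
    simp only [Complex.sub_re, Complex.add_re, Complex.ofReal_re, Complex.sub_im,
      Complex.add_im, Complex.ofReal_im]
    have hd : sden r c s₀ x ≠ 0 := (sden_pos hr hsin).ne'
    field_simp
    rw [← hre, ← him]
    ring
  simp_rw [h2] at hIm
  rw [MeasureTheory.integral_const_mul] at hIm
  rcases mul_eq_zero.mp hIm with h | h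
  · exact absurd h hw₀.ne'
  · exact h

theorem stmt12 (μ : Measure ℝ) [IsProbabilityMeasure μ]
    (hcomp : ∃ K : Set ℝ, IsCompact K ∧ μ Kᶜ = 0)
    (hnotpoint : ∀ t : ℝ, μ ≠ Measure.dirac t)
    (α : ℝ) (hα : α ∈ Set.Ioo (0 : ℝ) 1) (c : ℝ)
    (w₀ : ℂ) (hw₀ : 0 < w₀.im)
    (heq : w₀ * cauchyT μ (w₀ + c) = ((1 - α : ℝ) : ℂ))
    (huniq : ∀ w : ℂ, 0 < w.im → w * cauchyT μ (w + c) = ((1 - α : ℝ) : ℂ) → w = w₀) :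
    let f : ℝ → ℝ := fun s =>
      (∫ t : ℝ, Real.log (norm
          (((norm w₀ : ℝ) : ℂ) * Complex.exp ((s : ℂ) * Complex.I) + (c : ℂ) - (t : ℂ))) ∂μ)
        - (1 - α) * Real.log (norm w₀)
    (∀ s ∈ Set.Ioo (0 : ℝ) Real.pi, DifferentiableAt ℝ f s ∧ DifferentiableAt ℝ (deriv f) s) ∧
    w₀.arg ∈ Set.Ioo (0 : ℝ) Real.pi ∧
    deriv f w₀.arg = 0 ∧
    (∀ s ∈ Set.Ioo (0 : ℝ) Real.pi, deriv f s = 0 → deriv (deriv f) s < 0) ∧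
    (∀ s ∈ Set.Ioo (0 : ℝ) Real.pi, deriv f s = 0 → s = w₀.arg) ∧
    (∀ s ∈ Set.Ioo (0 : ℝ) Real.pi, s ≠ w₀.arg → f s < f w₀.arg) := by
  intro f
  obtain ⟨K, hK, hK0⟩ := hcomp
  obtain ⟨M, hKM⟩ := hK.isBounded.subset_closedBall 0
  have haeK : ∀ᵐ x ∂μ, x ∈ K := by
    rw [ae_iff]
    convert hK0 using 2
    rfl
  have hM : ∀ᵐ x ∂μ, |c - x| ≤ |c| + M := by
    filter_upwards [haeK] with x hx
    have h1 : |x| ≤ M := by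
      have := hKM hx
      simpa [Metric.mem_closedBall, Real.dist_eq] using this
    have h2 : |c - x| ≤ |c| + |x| := by
      rw [sub_eq_add_neg]
      exact (abs_add_le _ _).trans (by rw [abs_neg])
    linarith
  have hw0ne : w₀ ≠ 0 := fun h => by simp [h] at hw₀
  set r := ‖w₀‖ with hrdef
  set s₀ := Complex.arg w₀ with hsdef
  have hr : 0 < r := norm_pos_iff.mpr hw0ne
  have hs₀ : s₀ ∈ Set.Ioo (0:ℝ) Real.pi := by
    constructor
    · rcases lt_or_eq_of_le (Complex.arg_nonneg_iff.mpr hw₀.le) with h | h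
      · exact h
      · exact absurd (Complex.arg_eq_zero_iff.mp h.symm).2 hw₀.ne'
    · rcases lt_or_eq_of_le (Complex.arg_le_pi w₀) with h | h
      · exact h
      · exact absurd (Complex.arg_eq_pi_iff.mp h).2 hw₀.ne'
  have hfeq : f = fun s => (∫ x, (1/2) * Real.log (sden r c s x) ∂μ) - (1-α) * Real.log r := by
    funext s
    have h1 : f s = (∫ x : ℝ, Real.log (norm
        ((r:ℂ) * Complex.exp ((s:ℂ)*Complex.I) + (c:ℂ) - (x:ℂ))) ∂μ) - (1-α) * Real.log r := rfl
    rw [h1]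
    congr 1
    exact integral_congr_ae (Filter.Eventually.of_forall fun x => integrand_eq r c s x)
  set T1f := fun s => ∫ x, (c-x)/sden r c s x ∂μ with hT1def
  set T2f := fun s => ∫ x, (c-x)^2/(sden r c s x)^2 ∂μ with hT2def
  have hsinpos : ∀ s ∈ Set.Ioo (0:ℝ) Real.pi, 0 < Real.sin s :=
    fun s hs => Real.sin_pos_of_pos_of_lt_pi hs.1 hs.2
  have hfD : ∀ s ∈ Set.Ioo (0:ℝ) Real.pi, HasDerivAt f (-(r*Real.sin s) * T1f s) s := by
    intro s hs
    rw [hfeq]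
    exact (intA hr hM hs).sub_const _
  have hderiv : ∀ s ∈ Set.Ioo (0:ℝ) Real.pi, deriv f s = -(r*Real.sin s) * T1f s :=
    fun s hs => (hfD s hs).deriv
  have hT1D : ∀ s ∈ Set.Ioo (0:ℝ) Real.pi, HasDerivAt T1f (2*r*Real.sin s * T2f s) s :=
    fun s hs => intB hr hM hs
  have hD1D : ∀ s ∈ Set.Ioo (0:ℝ) Real.pi, HasDerivAt (fun u => -(r*Real.sin u)*T1f u)
      (-(r*Real.cos s)*T1f s + -(r*Real.sin s)*(2*r*Real.sin s*T2f s)) s := by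
    intro s hs
    have h1 : HasDerivAt (fun u => -(r*Real.sin u)) (-(r*Real.cos s)) s :=
      (((Real.hasDerivAt_sin s).const_mul r)).neg
    exact h1.mul (hT1D s hs)
  have hev : ∀ s ∈ Set.Ioo (0:ℝ) Real.pi,
      deriv f =ᶠ[nhds s] fun u => -(r*Real.sin u)*T1f u := by
    intro s hs
    filter_upwards [isOpen_Ioo.mem_nhds hs] with u hu
    exact hderiv u hu
  have hdd : ∀ s ∈ Set.Ioo (0:ℝ) Real.pi, deriv (deriv f) s =
      -(r*Real.cos s)*T1f s + -(r*Real.sin s)*(2*r*Real.sin s*T2f s) := by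
    intro s hs
    rw [(hev s hs).deriv_eq]
    exact (hD1D s hs).deriv
  have hT1z : T1f s₀ = 0 := by
    apply T1_zero hw₀
    have h : (w₀ * ∫ x : ℝ, (w₀ + (c:ℂ) - (x:ℂ))⁻¹ ∂μ) = ((1-α:ℝ):ℂ) := heq
    rw [h, Complex.ofReal_im]
  have hT2pos : ∀ s ∈ Set.Ioo (0:ℝ) Real.pi, 0 < T2f s :=
    fun s hs => T2_pos hr hM (hnotpoint c) (hsinpos s hs)
  have hmono : StrictMonoOn T1f (Set.Ioo 0 Real.pi) := by
    apply strictMonoOn_of_deriv_pos (convex_Ioo _ _)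
    · intro s hs
      exact ((hT1D s hs).differentiableAt.continuousAt).continuousWithinAt
    · intro s hs
      rw [interior_Ioo] at hs
      rw [(hT1D s hs).deriv]
      exact mul_pos (mul_pos (mul_pos two_pos hr) (hsinpos s hs)) (hT2pos s hs)
  have hcritT1 : ∀ s ∈ Set.Ioo (0:ℝ) Real.pi, deriv f s = 0 → T1f s = 0 := by
    intro s hs hcrit
    rw [hderiv s hs] at hcrit
    rcases mul_eq_zero.mp hcrit with h | h
    · exact absurd h (by have := mul_pos hr (hsinpos s hs); intro h'; linarith [neg_eq_zero.mp h'])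
    · exact h
  refine ⟨?_, hs₀, ?_, ?_, ?_, ?_⟩
  · intro s hs
    exact ⟨(hfD s hs).differentiableAt,
      (hD1D s hs).differentiableAt.congr_of_eventuallyEq (hev s hs)⟩
  · rw [hderiv s₀ hs₀, hT1z]; ring
  · intro s hs hcrit
    rw [hdd s hs, hcritT1 s hs hcrit]
    have h1 := hT2pos s hs
    have h2 := mul_pos hr (hsinpos s hs)
    nlinarith [mul_pos h2 (mul_pos h2 h1)]
  · intro s hs hcrit
    exact hmono.injOn hs hs₀ ((hcritT1 s hs hcrit).trans hT1z.symm)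
  · intro s hs hne
    rcases lt_or_gt_of_ne hne with h | h
    · have hsub : Set.Ioc (0:ℝ) s₀ ⊆ Set.Ioo 0 Real.pi :=
        fun u hu => ⟨hu.1, lt_of_le_of_lt hu.2 hs₀.2⟩
      have hmf : StrictMonoOn f (Set.Ioc 0 s₀) := by
        apply strictMonoOn_of_deriv_pos (convex_Ioc _ _)
        · intro u hu
          exact ((hfD u (hsub hu)).differentiableAt.continuousAt).continuousWithinAt
        · intro u hu
          rw [interior_Ioc] at hu
          have huIoo : u ∈ Set.Ioo 0 Real.pi := ⟨hu.1, lt_trans hu.2 hs₀.2⟩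
          rw [hderiv u huIoo]
          have hneg : T1f u < 0 := by
            have h2 := hmono huIoo hs₀ hu.2
            rwa [hT1z] at h2
          have hp : 0 < r * Real.sin u := mul_pos hr (hsinpos u huIoo)
          nlinarith [mul_pos hp (neg_pos.2 hneg)]
      exact hmf ⟨hs.1, h.le⟩ ⟨hs₀.1, le_refl _⟩ h
    · have hsub : Set.Ico s₀ Real.pi ⊆ Set.Ioo 0 Real.pi :=
        fun u hu => ⟨lt_of_lt_of_le hs₀.1 hu.1, hu.2⟩
      have hmf : StrictAntiOn f (Set.Ico s₀ Real.pi) := by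
        apply strictAntiOn_of_deriv_neg (convex_Ico _ _)
        · intro u hu
          exact ((hfD u (hsub hu)).differentiableAt.continuousAt).continuousWithinAt
        · intro u hu
          rw [interior_Ico] at hu
          have huIoo : u ∈ Set.Ioo 0 Real.pi := ⟨lt_trans hs₀.1 hu.1, hu.2⟩
          rw [hderiv u huIoo]
          have hpos2 : T1f u > 0 := by
            have h2 := hmono hs₀ huIoo hu.1
            rwa [hT1z] at h2
          have hp : 0 < r * Real.sin u := mul_pos hr (hsinpos u huIoo)
          nlinarith [mul_pos hp hpos2]
      exact hmf ⟨le_refl _, hs₀.2⟩ ⟨h.le, hs.2⟩ h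
end

section
/- Let n ≥ 1, let V : ℝ → ℝ be measurable with ∫_ℝ |x|^k·e^{−V(x)} dx < ∞ for all k ∈ ℕ, and let (ψ_j)_{j≥0} be monic real polynomials with deg ψ_j = j satisfying ∫_ℝ ψ_i(x)·ψ_j(x)·e^{−V(x)} dx = c_i·c_j·δ_{ij} for some reals c_j. Then ∫_{ℝⁿ} ( ∏_{k=1}^n ψ_{n−k}(y_k)·e^{−V(y_k)} ) · Δ_n(y) dy = ∏_{k=0}^{n−1} c_k², where Δ_n(y) := ∏_{1≤i<j≤n}(y_i − y_j). -/
open MeasureTheory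

/-- The Vandermonde product `∏_{i<j} (y i - y j)`. -/
noncomputable def vdm {n : ℕ} (y : Fin n → ℝ) : ℝ :=
  ∏ i : Fin n, ∏ j : Fin n, if i < j then y i - y j else 1

lemma revPerm_succ_eq (n : ℕ) :
    (Fin.revPerm : Equiv.Perm (Fin (n+1))) =
      (finRotate (n+1))⁻¹ * Equiv.Perm.decomposeFin.symm (0, Fin.revPerm) := by
  ext x
  refine Fin.cases ?_ (fun i => ?_) x <;>
    simp only [Equiv.Perm.mul_apply, Equiv.Perm.decomposeFin_symm_apply_zero,
      Equiv.Perm.decomposeFin_symm_apply_succ, Equiv.swap_self, Equiv.refl_apply,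
      Fin.revPerm_apply, Fin.rev_zero, Fin.rev_succ]
  · rw [← finRotate_last, Equiv.Perm.inv_def, Equiv.symm_apply_apply]
  · rw [show (Fin.rev i).succ = finRotate (n+1) (Fin.rev i).castSucc by
      rw [finRotate_succ_apply, Fin.coeSucc_eq_succ], Equiv.Perm.inv_def, Equiv.symm_apply_apply]

lemma sign_revPerm (n : ℕ) :
    Equiv.Perm.sign (Fin.revPerm : Equiv.Perm (Fin n)) = (-1) ^ (n * (n-1) / 2) := by
  induction n with
  | zero => simp [Subsingleton.elim (Fin.revPerm : Equiv.Perm (Fin 0)) 1]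
  | succ n ih =>
      rw [revPerm_succ_eq, map_mul, map_inv, sign_finRotate,
        Equiv.Perm.decomposeFin.symm_sign, if_pos rfl, one_mul, ih,
        ← inv_pow, inv_neg, inv_one]
      have h2 : (n+1) * (n + 1 - 1) / 2 = n + n * (n-1) / 2 := by
        rw [← Finset.sum_range_id, ← Finset.sum_range_id, Finset.sum_range_succ, add_comm]
      rw [h2, pow_add, Nat.add_sub_cancel]

lemma card_Ioi_sum (n : ℕ) : ∑ i : Fin n, (Finset.Ioi i).card = n * (n-1) / 2 := by
  simp only [Fin.card_Ioi]
  rw [show (∑ i : Fin n, (n - 1 - (i:ℕ))) = ∑ i : Fin n, (i:ℕ) from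
    Fintype.sum_equiv Fin.revPerm _ _ (fun i => by
      simp only [Fin.revPerm_apply, Fin.val_rev]; omega),
    Fin.sum_univ_eq_sum_range (fun i => i) n, Finset.sum_range_id]

lemma vdm_eq_det (n : ℕ) (y : Fin n → ℝ) (ψ : ℕ → Polynomial ℝ)
    (hmonic : ∀ j, (ψ j).Monic) (hdeg : ∀ j, (ψ j).natDegree = j) :
    vdm y = (-1:ℝ) ^ (n * (n-1) / 2) *
        (Matrix.of fun i j : Fin n => (ψ (j:ℕ)).eval (y i)).det := by
  rw [vdm, ← Matrix.det_eval_matrixOfPolynomials_eq_det_vandermonde y (fun j => ψ (j:ℕ))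
      (fun i => hdeg i) (fun i => hmonic i), Matrix.det_vandermonde]
  have h1 : ∀ i : Fin n, (∏ j : Fin n, if i < j then y i - y j else 1)
      = ∏ j ∈ Finset.Ioi i, (-1) * (y j - y i) := by
    intro i
    rw [← Finset.prod_filter]
    congr 1
    · ext j; simp [Finset.mem_filter]
    · funext j; ring
  simp_rw [h1, Finset.prod_mul_distrib, Finset.prod_const]
  rw [Finset.prod_pow_eq_pow_sum, card_Ioi_sum]

lemma integrable_poly_exp (V : ℝ → ℝ) (hV : Measurable V)
    (hmom : ∀ k : ℕ, Integrable (fun x : ℝ => |x| ^ k * Real.exp (-V x)))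
    (P : Polynomial ℝ) : Integrable (fun x : ℝ => P.eval x * Real.exp (-V x)) := by
  have hxk : ∀ k : ℕ, Integrable (fun x : ℝ => x ^ k * Real.exp (-V x)) := by
    intro k
    refine (hmom k).mono' ?_ ?_
    · exact ((measurable_id.pow_const k).mul
        (Real.measurable_exp.comp hV.neg)).aestronglyMeasurable
    · filter_upwards with x
      rw [Real.norm_eq_abs, abs_mul, abs_pow, Real.abs_exp]
  have heq : (fun x : ℝ => P.eval x * Real.exp (-V x))
      = fun x => ∑ i ∈ Finset.range (P.natDegree + 1),
          P.coeff i * (x ^ i * Real.exp (-V x)) := by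
    funext x
    rw [Polynomial.eval_eq_sum_range, Finset.sum_mul]
    simp [mul_assoc]
  rw [heq]
  exact integrable_finset_sum _ (fun i _ => (hxk i).const_mul _)

theorem stmt14 (n : ℕ) (hn : 1 ≤ n) (V : ℝ → ℝ) (hV : Measurable V)
    (hmom : ∀ k : ℕ, Integrable (fun x : ℝ => |x| ^ k * Real.exp (-V x)))
    (ψ : ℕ → Polynomial ℝ) (hmonic : ∀ j, (ψ j).Monic) (hdeg : ∀ j, (ψ j).natDegree = j)
    (c : ℕ → ℝ)
    (horth : ∀ i j : ℕ,
      (∫ x : ℝ, (ψ i).eval x * (ψ j).eval x * Real.exp (-V x))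
        = if i = j then c i * c j else 0) :
    (∫ y : Fin n → ℝ,
        (∏ k : Fin n, (ψ (n - 1 - (k : ℕ))).eval (y k) * Real.exp (-V (y k))) * vdm y)
      = ∏ k ∈ Finset.range n, (c k) ^ 2 := by
  classical
  set m := n * (n-1) / 2 with hm
  have hF : ∀ a b : ℕ,
      Integrable (fun x : ℝ => (ψ a).eval x * (ψ b).eval x * Real.exp (-V x)) := by
    intro a b
    simpa [Polynomial.eval_mul] using integrable_poly_exp V hV hmom (ψ a * ψ b)
  have key : (fun y : Fin n → ℝ =>
      (∏ k : Fin n, (ψ (n - 1 - (k : ℕ))).eval (y k) * Real.exp (-V (y k))) * vdm y)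
      = fun y => ∑ σ : Equiv.Perm (Fin n),
          ((-1:ℝ)^m * ((Equiv.Perm.sign σ : ℤ) : ℝ)) *
          ∏ k : Fin n, ((ψ (n-1-(k:ℕ))).eval (y k) * (ψ ((σ⁻¹ k : Fin n) : ℕ)).eval (y k)
            * Real.exp (-V (y k))) := by
    funext y
    rw [vdm_eq_det n y ψ hmonic hdeg, Matrix.det_apply', Finset.mul_sum, Finset.mul_sum]
    refine Finset.sum_congr rfl (fun σ _ => ?_)
    have hdet : (∏ i : Fin n, (Matrix.of fun i j : Fin n => (ψ (j:ℕ)).eval (y i)) (σ i) i)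
        = ∏ k : Fin n, (ψ ((σ⁻¹ k : Fin n) : ℕ)).eval (y k) := by
      rw [← Equiv.prod_comp σ (fun k => (ψ ((σ⁻¹ k : Fin n) : ℕ)).eval (y k))]
      simp [Matrix.of_apply]
    rw [hdet,
      show ∀ (a b c d : ℝ), a * (b * (c * d)) = (b * c) * (a * d) from
        fun a b c d => by ring,
      ← Finset.prod_mul_distrib]
    congr 1
    exact Finset.prod_congr rfl (fun k _ => by ring)
  rw [key, integral_finset_sum]
  · have hterm : ∀ σ : Equiv.Perm (Fin n),
        (∫ y : Fin n → ℝ, ((-1:ℝ)^m * ((Equiv.Perm.sign σ : ℤ) : ℝ)) *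
          ∏ k : Fin n, ((ψ (n-1-(k:ℕ))).eval (y k) * (ψ ((σ⁻¹ k : Fin n) : ℕ)).eval (y k)
            * Real.exp (-V (y k))))
        = ((-1:ℝ)^m * ((Equiv.Perm.sign σ : ℤ) : ℝ)) *
          ∏ k : Fin n, (if (n-1-(k:ℕ)) = ((σ⁻¹ k : Fin n) : ℕ)
            then c (n-1-(k:ℕ)) * c ((σ⁻¹ k : Fin n) : ℕ) else 0) := by
      intro σ
      rw [integral_const_mul,
        integral_fintype_prod_volume_eq_prod (ι := Fin n)
          (f := fun k x => (ψ (n-1-(k:ℕ))).eval x * (ψ ((σ⁻¹ k : Fin n) : ℕ)).eval x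
            * Real.exp (-V x))]
      congr 1
      exact Finset.prod_congr rfl (fun k _ => horth _ _)
    rw [Finset.sum_congr rfl (fun σ _ => hterm σ)]
    rw [Finset.sum_eq_single Fin.revPerm]
    · -- the reversal term
      have hval : ∀ k : Fin n, ((Fin.revPerm⁻¹ k : Fin n) : ℕ) = n - 1 - (k:ℕ) := by
        intro k
        rw [show (Fin.revPerm : Equiv.Perm (Fin n))⁻¹ = Fin.revPerm from rfl]
        simp only [Fin.revPerm_apply, Fin.val_rev]
        omega
      have h1 : ∀ k : Fin n, (if (n-1-(k:ℕ)) = ((Fin.revPerm⁻¹ k : Fin n) : ℕ)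
            then c (n-1-(k:ℕ)) * c ((Fin.revPerm⁻¹ k : Fin n) : ℕ) else 0)
          = c (n-1-(k:ℕ)) * c (n-1-(k:ℕ)) := by
        intro k
        rw [hval k, if_pos rfl]
      rw [Finset.prod_congr rfl (fun k _ => h1 k), sign_revPerm]
      have hsign : (((((-1:ℤˣ) ^ m : ℤˣ) : ℤ)) : ℝ) = (-1:ℝ)^m := by push_cast; ring
      rw [hsign, ← mul_pow]
      norm_num
      rw [Fin.prod_univ_eq_prod_range (fun k => c (n-1-k) * c (n-1-k)) n,
        Finset.prod_range_reflect (fun k => c k * c k) n]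
      exact Finset.prod_congr rfl (fun k _ => (sq (c k)).symm)
    · -- other permutations give zero
      intro σ _ hσ
      have hinv : σ⁻¹ ≠ Fin.revPerm := by
        intro h
        apply hσ
        have : σ = (Fin.revPerm : Equiv.Perm (Fin n))⁻¹ := by
          rw [← h, inv_inv]
        rw [this, ← Fin.revPerm_symm]
        rfl
      obtain ⟨k, hk⟩ : ∃ k : Fin n, σ⁻¹ k ≠ Fin.revPerm k := by
        by_contra h
        push_neg at h
        exact hinv (Equiv.ext h)
      have hne : ¬ (n-1-(k:ℕ)) = ((σ⁻¹ k : Fin n) : ℕ) := by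
        intro h
        apply hk
        apply Fin.ext
        simp only [Fin.revPerm_apply, Fin.val_rev]
        omega
      rw [Finset.prod_eq_zero (Finset.mem_univ k) (by rw [if_neg hne]), mul_zero]
    · intro h
      exact absurd (Finset.mem_univ _) h
  · intro σ _
    exact ((Integrable.fintype_prod (fun k : Fin n => hF (n-1-(k:ℕ)) ((σ⁻¹ k : Fin n) : ℕ))).const_mul _)
end
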